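/- arXiv:2604.08732 — 3 statements merged into one kernel-verified Lean document; each statement's English description precedes it below -/
import Mathlib

section
/- Let 1 < p < ∞ and (x_i) ∈ ℓ^p(X) with ‖(x_i)‖_p = 1 and x_i ≠ 0 for all i. Let (x_i*) ∈ S_{(x_i)} ⊆ ℓ^q(X*). Then the identity map I : (S_{(x_i)}, weak*) → (S_{(x_i)}, weak) is continuous at (x_i*) if and only if for each i ∈ ℕ the normalized functional x_i*/‖x_i*‖ ∈ S_{x_i/‖x_i‖} is a point of continuity of the identity from (S_{x_i/‖x_i‖}, weak*) to (S_{x_i/‖x_i‖}, weak). -/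
open NormedSpace

/-- The topology on `A` induced by a pairing `A → (B → ℝ)` (with the product topology
on `B → ℝ`), i.e. the coarsest topology making all evaluations `a ↦ f a b` continuous. -/
def pairingTop {A B : Type*} (f : A → B → ℝ) : TopologicalSpace A :=
  TopologicalSpace.induced f Pi.topologicalSpace

/-- The weak* topology on `ℓ^q(X*)` viewed as a subspace of `ℓ^p(X)*` via the canonical
pairing `⟨(x_i*), (x_i)⟩ = ∑ x_i*(x_i)`. -/
noncomputable def wStarTop {X : Type*} [NormedAddCommGroup X] [NormedSpace ℝ X]
    (p q : ENNReal) [Fact (1 ≤ p)] [Fact (1 ≤ q)] :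
    TopologicalSpace (lp (fun _ : ℕ => StrongDual ℝ X) q) :=
  pairingTop fun φ (v : lp (fun _ : ℕ => X) p) => ∑' i, φ i (v i)

/-- The weak topology on `ℓ^q(X*)`. -/
noncomputable def wTop {X : Type*} [NormedAddCommGroup X] [NormedSpace ℝ X]
    (q : ENNReal) [Fact (1 ≤ q)] :
    TopologicalSpace (lp (fun _ : ℕ => StrongDual ℝ X) q) :=
  pairingTop fun φ (Λ : StrongDual ℝ (lp (fun _ : ℕ => StrongDual ℝ X) q)) => Λ φ

/-- The weak* topology on `X*`. -/
noncomputable def wStarTopDual (X : Type*) [NormedAddCommGroup X] [NormedSpace ℝ X] :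
    TopologicalSpace (StrongDual ℝ X) :=
  pairingTop fun (g : StrongDual ℝ X) (x : X) => g x

/-- The weak topology on `X*`. -/
noncomputable def wTopDual (X : Type*) [NormedAddCommGroup X] [NormedSpace ℝ X] :
    TopologicalSpace (StrongDual ℝ X) :=
  pairingTop fun (g : StrongDual ℝ X)
    (Λ : StrongDual ℝ (StrongDual ℝ X)) => Λ g

open Filter Topology Real

/-- Equality case of Young's inequality. -/
lemma young_eq {P Q : ℝ} (hPQ : Real.HolderConjugate P Q) {a b : ℝ}
    (ha : 0 ≤ a) (hb : 0 ≤ b) (h : a * b = a ^ P / P + b ^ Q / Q) :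
    a ^ P = b ^ Q := by
  by_contra hne
  rcases ha.eq_or_lt with h0 | ha'
  · rw [← h0, Real.zero_rpow hPQ.ne_zero] at h hne
    rw [zero_mul, zero_div, zero_add] at h
    have hbQ : b ^ Q = 0 := by
      have := h.symm
      field_simp [hPQ.symm.ne_zero] at this
      simp [this, Real.zero_rpow hPQ.symm.ne_zero]
    exact hne hbQ.symm
  rcases hb.eq_or_lt with h0 | hb'
  · rw [← h0, Real.zero_rpow hPQ.symm.ne_zero] at h hne
    rw [mul_zero, zero_div, add_zero] at h
    have haP : a ^ P = 0 := by
      have := h.symm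
      field_simp [hPQ.ne_zero] at this
      simp [this, Real.zero_rpow hPQ.ne_zero]
    exact hne haP
  have hxy : Real.log (a ^ P) ≠ Real.log (b ^ Q) := by
    intro hl
    apply hne
    calc a ^ P = Real.exp (Real.log (a ^ P)) :=
          (Real.exp_log (Real.rpow_pos_of_pos ha' P)).symm
      _ = Real.exp (Real.log (b ^ Q)) := by rw [hl]
      _ = b ^ Q := Real.exp_log (Real.rpow_pos_of_pos hb' Q)
  have key := strictConvexOn_exp.2 (Set.mem_univ (Real.log (a ^ P)))
      (Set.mem_univ (Real.log (b ^ Q))) hxy hPQ.inv_pos hPQ.symm.inv_pos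
      hPQ.inv_add_inv_eq_one
  rw [smul_eq_mul, smul_eq_mul, smul_eq_mul, smul_eq_mul,
      Real.exp_log (Real.rpow_pos_of_pos ha' P),
      Real.exp_log (Real.rpow_pos_of_pos hb' Q),
      Real.log_rpow ha', Real.log_rpow hb',
      inv_mul_cancel_left₀ hPQ.ne_zero, inv_mul_cancel_left₀ hPQ.symm.ne_zero,
      Real.exp_add, Real.exp_log ha', Real.exp_log hb'] at key
  rw [h, div_eq_inv_mul, div_eq_inv_mul] at key
  exact lt_irrefl _ key

section Top

lemma tendsto_nhds_pairingTop_iff {A B C : Type*} {f : A → B → ℝ} {l : Filter C}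
    {u : C → A} {a : A} :
    Tendsto u l (@nhds A (pairingTop f) a) ↔
      ∀ b, Tendsto (fun c => f (u c) b) l (𝓝 (f a b)) := by
  rw [pairingTop, nhds_induced, tendsto_comap_iff]
  exact tendsto_pi_nhds

lemma tendsto_nhdsWithin_pairingTop_iff {A B C : Type*} {f : A → B → ℝ} {l : Filter C}
    {u : C → A} {a : A} {S : Set A} :
    Tendsto u l (@nhdsWithin A (pairingTop f) a S) ↔
      (∀ b, Tendsto (fun c => f (u c) b) l (𝓝 (f a b))) ∧ ∀ᶠ c in l, u c ∈ S := by
  rw [show (@nhdsWithin A (pairingTop f) a S) = (@nhds A (pairingTop f) a ⊓ Filter.principal S)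
        from rfl,
      tendsto_inf, tendsto_principal, tendsto_nhds_pairingTop_iff]

lemma eval_tendsto_pairingTop {A B : Type*} (f : A → B → ℝ) (a : A) (b : B) :
    Tendsto (fun x => f x b) (@nhds A (pairingTop f) a) (𝓝 (f a b)) :=
  tendsto_nhds_pairingTop_iff.mp tendsto_id b

end Top

section CLM

variable {X : Type*} [NormedAddCommGroup X] [NormedSpace ℝ X]

/-- Coordinate projection as a continuous linear map. -/
noncomputable def projCLM (q : ENNReal) [Fact (1 ≤ q)] (i : ℕ) :
    lp (fun _ : ℕ => StrongDual ℝ X) q →L[ℝ] StrongDual ℝ X :=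
  LinearMap.mkContinuous
    { toFun := fun ψ => ψ i
      map_add' := fun ψ χ => by simp [lp.coeFn_add]
      map_smul' := fun c ψ => by simp [lp.coeFn_smul] }
    1 fun ψ => by
      rw [one_mul]
      exact lp.norm_apply_le_norm
        ((zero_lt_one.trans_le (Fact.out : (1 : ENNReal) ≤ q)).ne') ψ i

@[simp] lemma projCLM_apply (q : ENNReal) [Fact (1 ≤ q)] (i : ℕ)
    (ψ : lp (fun _ : ℕ => StrongDual ℝ X) q) : projCLM q i ψ = ψ i := rfl

/-- Coordinate inclusion as a continuous linear map. -/
noncomputable def singleCLM (q : ENNReal) [Fact (1 ≤ q)] (hq : 0 < q.toReal) (i : ℕ) :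
    StrongDual ℝ X →L[ℝ] lp (fun _ : ℕ => StrongDual ℝ X) q :=
  LinearMap.mkContinuous
    { toFun := fun g => lp.single q i g
      map_add' := fun g h => by
        apply lp.ext
        funext j
        by_cases hj : j = i
        · subst hj
          simp [lp.single_apply_self, lp.coeFn_add]
        · simp [lp.single_apply_ne q i _ hj, lp.coeFn_add]
      map_smul' := fun c g => by simp }
    1 fun g => by
      rw [one_mul]
      exact le_of_eq (lp.norm_single (E := fun _ : ℕ => StrongDual ℝ X)
        (zero_lt_one.trans_le (Fact.out : (1 : ENNReal) ≤ q)) i g)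

@[simp] lemma singleCLM_apply (q : ENNReal) [Fact (1 ≤ q)] (hq : 0 < q.toReal) (i : ℕ)
    (g : StrongDual ℝ X) : singleCLM q hq i g = lp.single q i g := rfl

end CLM

set_option maxHeartbeats 2000000 in
/-- Let `(x_i) ∈ ℓ^p(X)` be a unit vector with all `x_i ≠ 0`, and let `(x_i*)` belong to
the state space `S_{(x_i)} ⊆ ℓ^q(X*)`.  Then the identity `(S_{(x_i)}, w*) → (S_{(x_i)}, w)`
is continuous at `(x_i*)` iff for each `i` the normalized functional `x_i*/‖x_i*‖` is a
`w*`-`w` point of continuity of the state space `S_{x_i/‖x_i‖}`. -/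
theorem stmt6 {X : Type*} [NormedAddCommGroup X] [NormedSpace ℝ X] [CompleteSpace X]
    (p q : ENNReal) [Fact (1 ≤ p)] [Fact (1 ≤ q)]
    (hp : 1 < p) (hp' : p ≠ ⊤) (hpq : 1 / p + 1 / q = 1)
    (xs : lp (fun _ : ℕ => X) p) (hxs : ‖xs‖ = 1) (hne : ∀ i, xs i ≠ 0)
    (S : Set (lp (fun _ : ℕ => StrongDual ℝ X) q))
    (hS : S = {ψ | ‖ψ‖ = 1 ∧ ∑' i, ψ i (xs i) = 1})
    (φ : lp (fun _ : ℕ => StrongDual ℝ X) q) (hφ : φ ∈ S) :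
    @ContinuousWithinAt _ _ (wStarTop p q) (wTop q) id S φ ↔
      ∀ i, @ContinuousWithinAt _ _ (wStarTopDual X) (wTopDual X) id
        {g : StrongDual ℝ X | ‖g‖ = 1 ∧ g (‖xs i‖⁻¹ • xs i) = 1}
        (‖φ i‖⁻¹ • φ i) := by
  classical
  subst hS
  -- ## exponent bookkeeping
  have hp0 : p ≠ 0 := (zero_lt_one.trans hp).ne'
  have hq0 : q ≠ 0 := (zero_lt_one.trans_le (Fact.out : (1 : ENNReal) ≤ q)).ne'
  have hq' : q ≠ ⊤ := by
    intro hq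
    rw [hq] at hpq
    simp only [one_div, ENNReal.inv_top, add_zero] at hpq
    rw [ENNReal.inv_eq_one] at hpq
    exact hp.ne' hpq
  have hP0 : 0 < p.toReal := ENNReal.toReal_pos hp0 hp'
  have hQ0 : 0 < q.toReal := ENNReal.toReal_pos hq0 hq'
  have hP1 : 1 < p.toReal := by
    rw [← ENNReal.toReal_one]
    exact (ENNReal.toReal_lt_toReal ENNReal.one_ne_top hp').mpr hp
  have hPQ : p.toReal.HolderConjugate q.toReal := by
    refine Real.holderConjugate_iff.mpr ⟨hP1, ?_⟩
    have h1 : (1 / p : ENNReal) ≠ ⊤ := by simp [one_div, hp0]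
    have := congrArg ENNReal.toReal hpq
    rwa [ENNReal.toReal_add h1 (by simp [one_div, hq0]), one_div, one_div,
      ENNReal.toReal_inv, ENNReal.toReal_inv, ENNReal.toReal_one] at this
  have hQP := hPQ.symm
  -- ## the Hölder equality lemma
  have key : ∀ ψ : lp (fun _ : ℕ => StrongDual ℝ X) q, ‖ψ‖ = 1 → (∑' j, ψ j (xs j)) = 1 →
      ∀ i, ψ i (xs i) = ‖ψ i‖ * ‖xs i‖ ∧ ‖ψ i‖ ^ q.toReal = ‖xs i‖ ^ p.toReal := by
    intro ψ hn hs
    have Sa : Summable (fun j => ‖ψ j‖ ^ q.toReal) := (lp.memℓp ψ).summable hQ0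
    have Sb : Summable (fun j => ‖xs j‖ ^ p.toReal) := (lp.memℓp xs).summable hP0
    have hab : ∀ j, ψ j (xs j) ≤ ‖ψ j‖ * ‖xs j‖ := fun j =>
      (le_abs_self _).trans (by rw [← Real.norm_eq_abs]; exact (ψ j).le_opNorm (xs j))
    have hy : ∀ j, ‖ψ j‖ * ‖xs j‖ ≤
        ‖ψ j‖ ^ q.toReal / q.toReal + ‖xs j‖ ^ p.toReal / p.toReal := fun j =>
      Real.young_inequality_of_nonneg (norm_nonneg _) (norm_nonneg _) hQP
    have Sab : Summable (fun j => ‖ψ j‖ * ‖xs j‖) :=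
      Real.summable_mul_of_Lp_Lq_of_nonneg hQP (fun j => norm_nonneg _)
        (fun j => norm_nonneg _) Sa Sb
    have SA : Summable (fun j => ψ j (xs j)) :=
      Summable.of_norm_bounded Sab (fun j => (ψ j).le_opNorm (xs j))
    have ta : ∑' j, ‖ψ j‖ ^ q.toReal = 1 := by
      have := lp.norm_rpow_eq_tsum hQ0 ψ
      rw [hn, Real.one_rpow] at this
      exact this.symm
    have tb : ∑' j, ‖xs j‖ ^ p.toReal = 1 := by
      have := lp.norm_rpow_eq_tsum hP0 xs
      rw [hxs, Real.one_rpow] at this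
      exact this.symm
    set f : ℕ → ℝ :=
      fun j => ‖ψ j‖ ^ q.toReal / q.toReal + ‖xs j‖ ^ p.toReal / p.toReal - ψ j (xs j)
      with hf
    have hf0 : ∀ j, 0 ≤ f j := fun j => sub_nonneg.2 ((hab j).trans (hy j))
    have Sf : Summable f := ((Sa.div_const _).add (Sb.div_const _)).sub SA
    have tf : ∑' j, f j = 0 := by
      rw [hf, Summable.tsum_sub ((Sa.div_const _).add (Sb.div_const _)) SA,
        Summable.tsum_add (Sa.div_const _) (Sb.div_const _), tsum_div_const, tsum_div_const,
        ta, tb, hs]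
      have := hQP.inv_add_inv_eq_one
      rw [one_div, one_div]
      linarith
    have hfz : ∀ j, f j = 0 := fun j =>
      le_antisymm (tf ▸ Sf.le_tsum j (fun k _ => hf0 k)) (hf0 j)
    intro i
    have eq1 : ψ i (xs i) =
        ‖ψ i‖ ^ q.toReal / q.toReal + ‖xs i‖ ^ p.toReal / p.toReal := by
      have := hfz i
      rw [hf] at this
      simp only [sub_eq_zero] at this
      exact this.symm
    have c1 : ψ i (xs i) = ‖ψ i‖ * ‖xs i‖ :=
      le_antisymm (hab i) ((hy i).trans eq1.ge)
    refine ⟨c1, ?_⟩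
    exact young_eq hQP (norm_nonneg _) (norm_nonneg _) (c1.symm.trans eq1)
  -- consequences
  have hφ1 : ‖φ‖ = 1 := hφ.1
  have hφ2 : (∑' j, φ j (xs j)) = 1 := hφ.2
  have hφpos : ∀ i, 0 < ‖φ i‖ := by
    intro i
    rcases (norm_nonneg (φ i)).eq_or_lt with h0 | h
    · exfalso
      have := (key φ hφ1 hφ2 i).2
      rw [← h0, Real.zero_rpow hQ0.ne'] at this
      exact absurd this.symm
        (ne_of_gt (Real.rpow_pos_of_pos (norm_pos_iff.2 (hne i)) _))
    · exact h
  have norm_coord : ∀ ψ : lp (fun _ : ℕ => StrongDual ℝ X) q,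
      ψ ∈ {ψ : lp (fun _ : ℕ => StrongDual ℝ X) q | ‖ψ‖ = 1 ∧ ∑' j, ψ j (xs j) = 1} →
      ∀ i, ‖ψ i‖ = ‖φ i‖ := by
    intro ψ hψ i
    refine Real.rpow_left_injOn hQ0.ne' (norm_nonneg _) (norm_nonneg _) ?_
    exact (key ψ hψ.1 hψ.2 i).2.trans ((key φ hφ1 hφ2 i).2).symm
  -- summability of pairings
  have pair_summable : ∀ (ψ : lp (fun _ : ℕ => StrongDual ℝ X) q) (v : lp (fun _ : ℕ => X) p),
      Summable (fun j => ψ j (v j)) := by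
    intro ψ v
    have Sa : Summable (fun j => ‖ψ j‖ ^ q.toReal) := (lp.memℓp ψ).summable hQ0
    have Sb : Summable (fun j => ‖v j‖ ^ p.toReal) := (lp.memℓp v).summable hP0
    have Sab : Summable (fun j => ‖ψ j‖ * ‖v j‖) :=
      Real.summable_mul_of_Lp_Lq_of_nonneg hQP (fun j => norm_nonneg _)
        (fun j => norm_nonneg _) Sa Sb
    exact Summable.of_norm_bounded Sab (fun j => (ψ j).le_opNorm (v j))
  -- evaluation against a single coordinate
  have pair_single : ∀ (ψ : lp (fun _ : ℕ => StrongDual ℝ X) q) (i : ℕ) (x : X),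
      (∑' j, ψ j ((lp.single p i x : lp (fun _ : ℕ => X) p) j)) = ψ i x := by
    intro ψ i x
    have h0 : ∀ j, j ≠ i → ψ j ((lp.single p i x : lp (fun _ : ℕ => X) p) j) = 0 := by
      intro j hj
      rw [lp.single_apply_ne (E := fun _ : ℕ => X) p i x hj, map_zero]
    rw [tsum_eq_single i h0, lp.single_apply_self (E := fun _ : ℕ => X)]
  have hFS : ∀ᶠ ψ in @nhdsWithin _ (wStarTop p q) φ
      {ψ : lp (fun _ : ℕ => StrongDual ℝ X) q | ‖ψ‖ = 1 ∧ ∑' j, ψ j (xs j) = 1},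
      ‖ψ‖ = 1 ∧ ∑' j, ψ j (xs j) = 1 :=
    @self_mem_nhdsWithin _ (wStarTop p q) φ _
  -- coordinate evaluations are weak*-continuous
  have eval_coord : ∀ (i : ℕ) (x : X),
      Tendsto (fun ψ : lp (fun _ : ℕ => StrongDual ℝ X) q => ψ i x)
        (@nhdsWithin _ (wStarTop p q) φ
          {ψ : lp (fun _ : ℕ => StrongDual ℝ X) q | ‖ψ‖ = 1 ∧ ∑' j, ψ j (xs j) = 1})
        (𝓝 (φ i x)) := by
    intro i x
    have h := (eval_tendsto_pairingTop
        (fun (ψ : lp (fun _ : ℕ => StrongDual ℝ X) q) (v : lp (fun _ : ℕ => X) p) =>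
          ∑' j, ψ j (v j)) φ (lp.single p i x)).mono_left
      (@nhdsWithin_le_nhds _ (wStarTop p q) φ
        {ψ : lp (fun _ : ℕ => StrongDual ℝ X) q | ‖ψ‖ = 1 ∧ ∑' j, ψ j (xs j) = 1})
    simpa only [pair_single] using h
  -- ## the equivalence
  constructor
  · -- forward direction
    intro H i
    have hc : 0 < ‖φ i‖ := hφpos i
    have Hmain : Tendsto id
        (@nhdsWithin _ (wStarTop p q) φ
          {ψ : lp (fun _ : ℕ => StrongDual ℝ X) q | ‖ψ‖ = 1 ∧ ∑' j, ψ j (xs j) = 1})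
        (@nhds _ (wTop q) φ) := H
    -- the coordinates of the substituted element
    have Tcoord : ∀ (g : StrongDual ℝ X) (j : ℕ),
        (φ + lp.single q i (‖φ i‖ • g - φ i) : lp (fun _ : ℕ => StrongDual ℝ X) q) j
          = if j = i then ‖φ i‖ • g else φ j := by
      intro g j
      have h1 : (φ + lp.single q i (‖φ i‖ • g - φ i) : lp (fun _ : ℕ => StrongDual ℝ X) q) j
          = φ j + (lp.single q i (‖φ i‖ • g - φ i) : lp (fun _ : ℕ => StrongDual ℝ X) q) j := by
        rw [lp.coeFn_add]
        rfl
      rw [h1]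
      by_cases hj : j = i
      · subst hj
        rw [lp.single_apply_self (E := fun _ : ℕ => StrongDual ℝ X), if_pos rfl]
        abel
      · rw [lp.single_apply_ne (E := fun _ : ℕ => StrongDual ℝ X) q i _ hj, if_neg hj, add_zero]
    -- the substitution map is continuous w*-w* and maps S_i into S
    have TT : Tendsto
        (fun g : StrongDual ℝ X => φ + lp.single q i (‖φ i‖ • g - φ i))
        (@nhdsWithin _ (wStarTopDual X) (‖φ i‖⁻¹ • φ i)
          {g : StrongDual ℝ X | ‖g‖ = 1 ∧ g (‖xs i‖⁻¹ • xs i) = 1})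
        (@nhdsWithin _ (wStarTop p q) φ
          {ψ : lp (fun _ : ℕ => StrongDual ℝ X) q | ‖ψ‖ = 1 ∧ ∑' j, ψ j (xs j) = 1}) := by
      rw [show wStarTop (X := X) p q
          = pairingTop (fun (ψ : lp (fun _ : ℕ => StrongDual ℝ X) q)
              (v : lp (fun _ : ℕ => X) p) => ∑' j, ψ j (v j)) from rfl]
      apply tendsto_nhdsWithin_pairingTop_iff.mpr
      constructor
      · intro v
        have hTg : ∀ g : StrongDual ℝ X,
            (∑' j, (φ + lp.single q i (‖φ i‖ • g - φ i) :
                lp (fun _ : ℕ => StrongDual ℝ X) q) j (v j))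
              = (∑' j, φ j (v j)) + (‖φ i‖ * g (v i) - φ i (v i)) := by
          intro g
          have hint : ∀ j, (φ + lp.single q i (‖φ i‖ • g - φ i) :
              lp (fun _ : ℕ => StrongDual ℝ X) q) j (v j)
                = φ j (v j) + (if j = i then (‖φ i‖ • g - φ i) (v j) else 0) := by
            intro j
            rw [Tcoord g j]
            by_cases hj : j = i
            · subst hj
              rw [if_pos rfl, if_pos rfl, ContinuousLinearMap.sub_apply]
              abel
            · rw [if_neg hj, if_neg hj, add_zero]
          have hu : Summable (fun j =>
              (if j = i then (‖φ i‖ • g - φ i) (v j) else 0 : ℝ)) :=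
            summable_of_ne_finset_zero (s := {i}) fun j hj =>
              if_neg (by simpa using hj)
          rw [tsum_congr hint, Summable.tsum_add (pair_summable φ v) hu,
            tsum_eq_single i (fun j hj => if_neg hj), if_pos rfl,
            ContinuousLinearMap.sub_apply, ContinuousLinearMap.smul_apply, smul_eq_mul]
        simp only [hTg]
        have ev : Tendsto (fun g : StrongDual ℝ X => g (v i))
            (@nhdsWithin _ (wStarTopDual X) (‖φ i‖⁻¹ • φ i)
              {g : StrongDual ℝ X | ‖g‖ = 1 ∧ g (‖xs i‖⁻¹ • xs i) = 1})
            (𝓝 ((‖φ i‖⁻¹ • φ i) (v i))) :=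
          (eval_tendsto_pairingTop (fun (g : StrongDual ℝ X) (x : X) => g x)
            (‖φ i‖⁻¹ • φ i) (v i)).mono_left
            (@nhdsWithin_le_nhds _ (wStarTopDual X) _ _)
        have h2 : Tendsto (fun g : StrongDual ℝ X =>
            (∑' j, φ j (v j)) + (‖φ i‖ * g (v i) - φ i (v i)))
            (@nhdsWithin _ (wStarTopDual X) (‖φ i‖⁻¹ • φ i)
              {g : StrongDual ℝ X | ‖g‖ = 1 ∧ g (‖xs i‖⁻¹ • xs i) = 1})
            (𝓝 ((∑' j, φ j (v j))
              + (‖φ i‖ * ((‖φ i‖⁻¹ • φ i) (v i)) - φ i (v i)))) :=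
          tendsto_const_nhds.add ((ev.const_mul ‖φ i‖).sub tendsto_const_nhds)
        simpa [ContinuousLinearMap.smul_apply, smul_eq_mul,
          mul_inv_cancel_left₀ hc.ne', sub_self, add_zero] using h2
      · have hev : ∀ᶠ g in (@nhdsWithin _ (wStarTopDual X) (‖φ i‖⁻¹ • φ i)
            {g : StrongDual ℝ X | ‖g‖ = 1 ∧ g (‖xs i‖⁻¹ • xs i) = 1}),
            g ∈ {g : StrongDual ℝ X | ‖g‖ = 1 ∧ g (‖xs i‖⁻¹ • xs i) = 1} :=
          @self_mem_nhdsWithin _ (wStarTopDual X) _ _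
        filter_upwards [hev] with g hg
        have hgx : g (xs i) = ‖xs i‖ := by
          have h2 := hg.2
          rw [map_smul, smul_eq_mul] at h2
          have hxi : ‖xs i‖ ≠ 0 := norm_ne_zero_iff.2 (hne i)
          field_simp at h2
          exact h2
        have hco : ∀ j, ‖(φ + lp.single q i (‖φ i‖ • g - φ i) :
            lp (fun _ : ℕ => StrongDual ℝ X) q) j‖ = ‖φ j‖ := by
          intro j
          by_cases hj : j = i
          · subst hj
            rw [Tcoord g j, if_pos rfl, norm_smul, hg.1, mul_one, norm_norm]
          · rw [Tcoord g j, if_neg hj]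
        constructor
        · -- norm is 1
          have h1 : ‖(φ + lp.single q i (‖φ i‖ • g - φ i) :
              lp (fun _ : ℕ => StrongDual ℝ X) q)‖ ^ q.toReal = 1 := by
            rw [lp.norm_rpow_eq_tsum hQ0,
              tsum_congr (fun j => by rw [hco j]),
              ← lp.norm_rpow_eq_tsum hQ0 φ, hφ1, Real.one_rpow]
          have h2 : ‖(φ + lp.single q i (‖φ i‖ • g - φ i) :
              lp (fun _ : ℕ => StrongDual ℝ X) q)‖ ^ q.toReal = 1 ^ q.toReal := by
            rw [h1, Real.one_rpow]
          exact Real.rpow_left_injOn hQ0.ne' (norm_nonneg _) (by norm_num : (0:ℝ) ≤ 1) h2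
        · -- pairing is 1
          have h1 : ∀ j, (φ + lp.single q i (‖φ i‖ • g - φ i) :
              lp (fun _ : ℕ => StrongDual ℝ X) q) j (xs j) = φ j (xs j) := by
            intro j
            by_cases hj : j = i
            · subst hj
              rw [Tcoord g j, if_pos rfl, ContinuousLinearMap.smul_apply, smul_eq_mul,
                hgx, (key φ hφ1 hφ2 j).1]
            · rw [Tcoord g j, if_neg hj]
          rw [tsum_congr h1]
          exact hφ2
    -- compose
    rw [show wTop (X := X) q = pairingTop (fun (ψ : lp (fun _ : ℕ => StrongDual ℝ X) q)
        (Λ : StrongDual ℝ (lp (fun _ : ℕ => StrongDual ℝ X) q)) => Λ ψ) from rfl] at Hmain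
    have HT := Hmain.comp TT
    have HT' : ∀ Λ : StrongDual ℝ (lp (fun _ : ℕ => StrongDual ℝ X) q),
        Tendsto (fun g : StrongDual ℝ X => Λ (φ + lp.single q i (‖φ i‖ • g - φ i)))
          (@nhdsWithin _ (wStarTopDual X) (‖φ i‖⁻¹ • φ i)
            {g : StrongDual ℝ X | ‖g‖ = 1 ∧ g (‖xs i‖⁻¹ • xs i) = 1})
          (𝓝 (Λ φ)) := fun Λ => tendsto_nhds_pairingTop_iff.mp HT Λ
    show Tendsto id
      (@nhdsWithin _ (wStarTopDual X) (‖φ i‖⁻¹ • φ i)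
        {g : StrongDual ℝ X | ‖g‖ = 1 ∧ g (‖xs i‖⁻¹ • xs i) = 1})
      (@nhds _ (wTopDual X) (‖φ i‖⁻¹ • φ i))
    rw [show wTopDual X = pairingTop (fun (g : StrongDual ℝ X)
        (Λ : StrongDual ℝ (StrongDual ℝ X)) => Λ g) from rfl]
    apply tendsto_nhds_pairingTop_iff.mpr
    intro Ξ
    have h1 := HT' (Ξ.comp (projCLM q i))
    have hfun : ∀ g : StrongDual ℝ X,
        (Ξ.comp (projCLM q i)) (φ + lp.single q i (‖φ i‖ • g - φ i)) = ‖φ i‖ * Ξ g := by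
      intro g
      rw [ContinuousLinearMap.comp_apply, projCLM_apply, Tcoord g i, if_pos rfl,
        map_smul, smul_eq_mul]
    have hval : (Ξ.comp (projCLM q i)) φ = Ξ (φ i) := by
      rw [ContinuousLinearMap.comp_apply, projCLM_apply]
    rw [hval] at h1
    simp only [hfun] at h1
    have h3 := h1.const_mul ‖φ i‖⁻¹
    simp only [inv_mul_cancel_left₀ hc.ne'] at h3
    simpa [map_smul, smul_eq_mul] using h3
  · -- backward direction
    intro H
    show Tendsto id
      (@nhdsWithin _ (wStarTop p q) φ
        {ψ : lp (fun _ : ℕ => StrongDual ℝ X) q | ‖ψ‖ = 1 ∧ ∑' j, ψ j (xs j) = 1})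
      (@nhds _ (wTop q) φ)
    -- coordinatewise weak convergence
    have K : ∀ (i : ℕ) (Ξ : StrongDual ℝ (StrongDual ℝ X)),
        Tendsto (fun ψ : lp (fun _ : ℕ => StrongDual ℝ X) q => Ξ (ψ i))
          (@nhdsWithin _ (wStarTop p q) φ
            {ψ : lp (fun _ : ℕ => StrongDual ℝ X) q | ‖ψ‖ = 1 ∧ ∑' j, ψ j (xs j) = 1})
          (𝓝 (Ξ (φ i))) := by
      intro i Ξ
      have hc : 0 < ‖φ i‖ := hφpos i
      have Hi : Tendsto id
          (@nhdsWithin _ (wStarTopDual X) (‖φ i‖⁻¹ • φ i)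
            {g : StrongDual ℝ X | ‖g‖ = 1 ∧ g (‖xs i‖⁻¹ • xs i) = 1})
          (@nhds _ (wTopDual X) (‖φ i‖⁻¹ • φ i)) := H i
      rw [show wTopDual X = pairingTop (fun (g : StrongDual ℝ X)
          (Λ : StrongDual ℝ (StrongDual ℝ X)) => Λ g) from rfl] at Hi
      have Tm : Tendsto (fun ψ : lp (fun _ : ℕ => StrongDual ℝ X) q => ‖φ i‖⁻¹ • ψ i)
          (@nhdsWithin _ (wStarTop p q) φ
            {ψ : lp (fun _ : ℕ => StrongDual ℝ X) q | ‖ψ‖ = 1 ∧ ∑' j, ψ j (xs j) = 1})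
          (@nhdsWithin _ (wStarTopDual X) (‖φ i‖⁻¹ • φ i)
            {g : StrongDual ℝ X | ‖g‖ = 1 ∧ g (‖xs i‖⁻¹ • xs i) = 1}) := by
        rw [show wStarTopDual X = pairingTop (fun (g : StrongDual ℝ X) (x : X) => g x) from rfl]
        apply tendsto_nhdsWithin_pairingTop_iff.mpr
        constructor
        · intro x
          have ev := eval_coord i x
          have h2 := ev.const_mul ‖φ i‖⁻¹
          simpa [ContinuousLinearMap.smul_apply, smul_eq_mul] using h2
        · filter_upwards [hFS] with ψ hψ
          have hni : ‖ψ i‖ = ‖φ i‖ := norm_coord ψ hψ i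
          constructor
          · rw [norm_smul, hni, norm_inv, norm_norm, inv_mul_cancel₀ hc.ne']
          · rw [ContinuousLinearMap.smul_apply, map_smul, smul_eq_mul, smul_eq_mul,
              (key ψ hψ.1 hψ.2 i).1, hni]
            have hxi : ‖xs i‖ ≠ 0 := norm_ne_zero_iff.2 (hne i)
            field_simp
      have comp := Hi.comp Tm
      have comp' := tendsto_nhds_pairingTop_iff.mp comp Ξ
      simp only [Function.comp_def, id_eq, map_smul, smul_eq_mul] at comp'
      have h3 := comp'.const_mul ‖φ i‖
      simp only [mul_inv_cancel_left₀ hc.ne'] at h3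
      exact h3
    -- now the weak convergence of the whole sequence
    rw [show wTop (X := X) q = pairingTop (fun (ψ : lp (fun _ : ℕ => StrongDual ℝ X) q)
        (Λ : StrongDual ℝ (lp (fun _ : ℕ => StrongDual ℝ X) q)) => Λ ψ) from rfl]
    apply tendsto_nhds_pairingTop_iff.mpr
    intro Λ
    simp only [id_eq]
    rw [Metric.tendsto_nhds]
    intro ε hε
    have hΛ1 : 0 < ‖Λ‖ + 1 := by positivity
    set δ : ℝ := ε / (4 * (‖Λ‖ + 1)) with hδdef
    have hδ : 0 < δ := by positivity
    have hδQ : 0 < δ ^ q.toReal := Real.rpow_pos_of_pos hδ _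
    have hδ4 : (‖Λ‖ + 1) * δ = ε / 4 := by
      rw [hδdef]
      field_simp
    have hxsum : HasSum (fun j => ‖xs j‖ ^ p.toReal) 1 := by
      have := lp.hasSum_norm hP0 xs
      rwa [hxs, Real.one_rpow] at this
    obtain ⟨N, hN⟩ := Metric.tendsto_atTop.mp hxsum.tendsto_sum_nat (δ ^ q.toReal) hδQ
    have hN' : 1 - ∑ j ∈ Finset.range N, ‖xs j‖ ^ p.toReal < δ ^ q.toReal := by
      have h2 := hN N le_rfl
      rw [Real.dist_eq] at h2
      have := abs_lt.mp h2
      linarith [this.1]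
    -- tail bound
    have tail : ∀ ψ : lp (fun _ : ℕ => StrongDual ℝ X) q,
        ‖ψ‖ = 1 → (∑' j, ψ j (xs j)) = 1 →
        ‖ψ - ∑ j ∈ Finset.range N, lp.single q j (ψ j)‖ ≤ δ := by
      intro ψ hψ1 hψ2
      have h1 := lp.norm_compl_sum_single hQ0 ψ (Finset.range N)
      have h2 : ∑ j ∈ Finset.range N, ‖ψ j‖ ^ q.toReal
          = ∑ j ∈ Finset.range N, ‖xs j‖ ^ p.toReal :=
        Finset.sum_congr rfl fun j _ => (key ψ hψ1 hψ2 j).2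
      have h3 : ‖ψ - ∑ j ∈ Finset.range N, lp.single q j (ψ j)‖ ^ q.toReal
          ≤ δ ^ q.toReal := by
        rw [h1, hψ1, Real.one_rpow, h2]
        linarith
      exact (Real.rpow_le_rpow_iff (norm_nonneg _) hδ.le hQ0).mp h3
    -- head converges
    have Khead : Tendsto (fun ψ : lp (fun _ : ℕ => StrongDual ℝ X) q =>
          ∑ j ∈ Finset.range N, Λ (lp.single q j (ψ j)))
        (@nhdsWithin _ (wStarTop p q) φ
          {ψ : lp (fun _ : ℕ => StrongDual ℝ X) q | ‖ψ‖ = 1 ∧ ∑' j, ψ j (xs j) = 1})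
        (𝓝 (∑ j ∈ Finset.range N, Λ (lp.single q j (φ j)))) := by
      apply tendsto_finset_sum
      intro j _
      have h4 := K j (Λ.comp (singleCLM q hQ0 j))
      simpa only [ContinuousLinearMap.comp_apply, singleCLM_apply] using h4
    have Khead' := Metric.tendsto_nhds.mp Khead (ε / 2) (by positivity)
    filter_upwards [hFS, Khead'] with ψ hψS hhead
    rw [Real.dist_eq] at hhead ⊢
    have hdec : ∀ χ : lp (fun _ : ℕ => StrongDual ℝ X) q,
        Λ χ = (∑ j ∈ Finset.range N, Λ (lp.single q j (χ j)))
          + Λ (χ - ∑ j ∈ Finset.range N, lp.single q j (χ j)) := by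
      intro χ
      rw [map_sub, map_sum]
      ring
    have e1 : |Λ (ψ - ∑ j ∈ Finset.range N, lp.single q j (ψ j))| ≤ ε / 4 := by
      calc |Λ (ψ - ∑ j ∈ Finset.range N, lp.single q j (ψ j))|
          ≤ ‖Λ‖ * ‖ψ - ∑ j ∈ Finset.range N, lp.single q j (ψ j)‖ := by
            rw [← Real.norm_eq_abs]
            exact Λ.le_opNorm _
        _ ≤ (‖Λ‖ + 1) * δ := by
            apply mul_le_mul (by linarith) (tail ψ hψS.1 hψS.2) (norm_nonneg _)
              (by linarith [norm_nonneg Λ])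
        _ = ε / 4 := hδ4
    have e2 : |Λ (φ - ∑ j ∈ Finset.range N, lp.single q j (φ j))| ≤ ε / 4 := by
      calc |Λ (φ - ∑ j ∈ Finset.range N, lp.single q j (φ j))|
          ≤ ‖Λ‖ * ‖φ - ∑ j ∈ Finset.range N, lp.single q j (φ j)‖ := by
            rw [← Real.norm_eq_abs]
            exact Λ.le_opNorm _
        _ ≤ (‖Λ‖ + 1) * δ := by
            apply mul_le_mul (by linarith) (tail φ hφ1 hφ2) (norm_nonneg _)
              (by linarith [norm_nonneg Λ])
        _ = ε / 4 := hδ4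
    have habs : |Λ ψ - Λ φ| ≤ |(∑ j ∈ Finset.range N, Λ (lp.single q j (ψ j)))
        - ∑ j ∈ Finset.range N, Λ (lp.single q j (φ j))|
        + |Λ (ψ - ∑ j ∈ Finset.range N, lp.single q j (ψ j))|
        + |Λ (φ - ∑ j ∈ Finset.range N, lp.single q j (φ j))| := by
      rw [hdec ψ, hdec φ]
      set a := ∑ j ∈ Finset.range N, Λ (lp.single q j (ψ j))
      set b := ∑ j ∈ Finset.range N, Λ (lp.single q j (φ j))
      set u := Λ (ψ - ∑ j ∈ Finset.range N, lp.single q j (ψ j))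
      set w := Λ (φ - ∑ j ∈ Finset.range N, lp.single q j (φ j))
      have h5 : a + u - (b + w) = ((a - b) + u) + -w := by ring
      rw [h5]
      calc |((a - b) + u) + -w| ≤ |(a - b) + u| + |(-w)| := abs_add_le _ _
        _ ≤ (|a - b| + |u|) + |(-w)| := by
            have := abs_add_le (a - b) u
            linarith
        _ = |a - b| + |u| + |w| := by rw [abs_neg]
    linarith
end

section
/- Let 1 < p < ∞ and (x_i) ∈ ℓ^p(X) with ‖(x_i)‖_p = 1 and x_i ≠ 0 for all i. Let (x_i*) ∈ S_{(x_i)}. Then the identity map I : (S_{(x_i)}, weak*) → (S_{(x_i)}, norm) is continuous at (x_i*) if and only if for each i ∈ ℕ the functional x_i*/‖x_i*‖ ∈ S_{x_i/‖x_i‖} is a point of weak*-to-norm continuity of the identity on S_{x_i/‖x_i‖}. -/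
open NormedSpace

open Filter Topology

set_option maxHeartbeats 1000000

section Helpers

lemma young_eq_s7 {a b r s : ℝ} (ha : 0 ≤ a) (hb : 0 ≤ b) (hrs : r.HolderConjugate s)
    (h : a * b = a ^ r / r + b ^ s / s) : a ^ r = b ^ s := by
  rcases eq_or_lt_of_le ha with ha0 | ha0
  · rw [← ha0, Real.zero_rpow hrs.ne_zero] at h ⊢
    rw [zero_mul, zero_div, zero_add] at h
    have : b ^ s = 0 := by
      field_simp [hrs.symm.ne_zero] at h
      linarith [h]
    rw [this]
  rcases eq_or_lt_of_le hb with hb0 | hb0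
  · rw [← hb0, Real.zero_rpow hrs.symm.ne_zero] at h ⊢
    rw [mul_zero, zero_div, add_zero] at h
    have : a ^ r = 0 := by
      field_simp [hrs.ne_zero] at h
      linarith [h]
    rw [this]
  by_contra hne
  set A := a ^ r with hA
  set B := b ^ s with hB
  have hApos : 0 < A := Real.rpow_pos_of_pos ha0 r
  have hBpos : 0 < B := Real.rpow_pos_of_pos hb0 s
  have hlog : Real.log A ≠ Real.log B := fun hl => hne (by
    rw [← Real.exp_log hApos, ← Real.exp_log hBpos, hl])
  have hkey := strictConvexOn_exp.2 (Set.mem_univ (Real.log A)) (Set.mem_univ (Real.log B))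
    hlog hrs.one_div_pos hrs.symm.one_div_pos (by simpa [one_div] using hrs.inv_add_inv_eq_one)
  have hL : Real.exp ((1/r) • Real.log A + (1/s) • Real.log B) = a * b := by
    rw [smul_eq_mul, smul_eq_mul, Real.exp_add]
    have h1 : Real.exp (1/r * Real.log A) = A ^ (1/r) := by
      rw [Real.rpow_def_of_pos hApos, mul_comm]
    have h2 : Real.exp (1/s * Real.log B) = B ^ (1/s) := by
      rw [Real.rpow_def_of_pos hBpos, mul_comm]
    rw [h1, h2, hA, hB, ← Real.rpow_mul ha, ← Real.rpow_mul hb,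
      mul_one_div, mul_one_div, div_self hrs.ne_zero, div_self hrs.symm.ne_zero,
      Real.rpow_one, Real.rpow_one]
  rw [hL, Real.exp_log hApos, Real.exp_log hBpos, smul_eq_mul, smul_eq_mul] at hkey
  rw [h] at hkey
  rw [one_div_mul_eq_div, one_div_mul_eq_div] at hkey
  exact lt_irrefl _ hkey

lemma pairing_continuous_eval {A B : Type*} (f : A → B → ℝ) (b : B) :
    Continuous[pairingTop f, inferInstance] fun a => f a b := by
  letI := pairingTop f
  exact (continuous_apply b).comp continuous_induced_dom

lemma pairing_continuous_affine {A B : Type*} (f : A → B → ℝ) (b : B) (e k : ℝ) :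
    Continuous[pairingTop f, inferInstance] fun a => e + k * f a b := by
  letI := pairingTop f
  exact continuous_const.add (continuous_const.mul (pairing_continuous_eval f b))

lemma pairing_continuous_const_mul {A B : Type*} (f : A → B → ℝ) (b : B) (k : ℝ) :
    Continuous[pairingTop f, inferInstance] fun a => k * f a b := by
  letI := pairingTop f
  exact continuous_const.mul (pairing_continuous_eval f b)

lemma pairing_continuous_rng {A A' B' : Type*} {tA : TopologicalSpace A} (g : A' → B' → ℝ)
    {Φ : A → A'} (h : ∀ b', Continuous[tA, inferInstance] fun a => g (Φ a) b') :
    Continuous[tA, pairingTop g] Φ := by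
  letI := tA
  exact continuous_induced_rng.mpr (continuous_pi h)

lemma tendstoWithin_of_cont {A B : Type*} {tA : TopologicalSpace A} {tB : TopologicalSpace B}
    {f : A → B} (hf : Continuous[tA, tB] f) {s : Set A} {t : Set B} (h : Set.MapsTo f s t)
    (x : A) : Filter.Tendsto f (@nhdsWithin A tA x s) (@nhdsWithin B tB (f x) t) := by
  letI := tA; letI := tB
  exact hf.continuousWithinAt.tendsto_nhdsWithin h

variable {X : Type*} [NormedAddCommGroup X] [NormedSpace ℝ X]
variable (p q : ENNReal) [Fact (1 ≤ p)] [Fact (1 ≤ q)]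

lemma memS_iff (hrs : p.toReal.HolderConjugate q.toReal)
    (xs : lp (fun _ : ℕ => X) p) (hxs : ‖xs‖ = 1) (hne : ∀ i, xs i ≠ 0)
    (ψ : lp (fun _ : ℕ => StrongDual ℝ X) q) :
    (‖ψ‖ = 1 ∧ ∑' i, ψ i (xs i) = 1) ↔
      ∀ i, ‖ψ i‖ = ‖xs i‖ ^ (p.toReal - 1) ∧ ψ i (xs i) = ‖ψ i‖ * ‖xs i‖ := by
  set r := p.toReal with hr
  set s := q.toReal with hsdef
  have hr0 : 0 < r := hrs.pos
  have hs0 : 0 < s := hrs.symm.pos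
  have hxsum : ∑' i, ‖xs i‖ ^ r = 1 := by
    rw [← lp.norm_rpow_eq_tsum hr0, hxs, Real.one_rpow]
  have hxsumm : Summable fun i => ‖xs i‖ ^ r := (lp.memℓp xs).summable hr0
  have hψsumm : Summable fun i => ‖ψ i‖ ^ s := (lp.memℓp ψ).summable hs0
  constructor
  · rintro ⟨h1, h2⟩
    have hψsum : ∑' i, ‖ψ i‖ ^ s = 1 := by
      rw [← lp.norm_rpow_eq_tsum hs0, h1, Real.one_rpow]
    set b : ℕ → ℝ := fun j => ‖ψ j‖ ^ s / s + ‖xs j‖ ^ r / r with hbdef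
    have hble : ∀ j, ψ j (xs j) ≤ b j := by
      intro j
      calc ψ j (xs j) ≤ ‖ψ j (xs j)‖ := le_abs_self _
        _ ≤ ‖ψ j‖ * ‖xs j‖ := (ψ j).le_opNorm (xs j)
        _ ≤ _ := Real.young_inequality_of_nonneg (norm_nonneg _) (norm_nonneg _) hrs.symm
    have hbsumm : Summable b := (hψsumm.div_const s).add (hxsumm.div_const r)
    have hbsum : ∑' j, b j = 1 := by
      rw [hbdef, Summable.tsum_add (hψsumm.div_const s) (hxsumm.div_const r),
        tsum_div_const, tsum_div_const, hψsum, hxsum]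
      have := hrs.inv_add_inv_eq_one
      rw [one_div, one_div]
      linarith
    have hmulsumm : Summable fun j => ‖ψ j‖ * ‖xs j‖ :=
      (Real.summable_mul_of_Lp_Lq_of_nonneg hrs.symm
        (fun i => norm_nonneg (ψ i)) (fun i => norm_nonneg (xs i)) hψsumm hxsumm)
    have hasumm : Summable fun j => ψ j (xs j) :=
      Summable.of_norm_bounded hmulsumm (fun j => (ψ j).le_opNorm (xs j))
    have key : ∀ j, ψ j (xs j) = b j := by
      by_contra hc
      push_neg at hc
      obtain ⟨j, hj⟩ := hc
      have hlt : ∑' k, ψ k (xs k) < ∑' k, b k :=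
        Summable.tsum_lt_tsum hble (lt_of_le_of_ne (hble j) hj) hasumm hbsumm
      rw [h2, hbsum] at hlt
      exact lt_irrefl 1 hlt
    intro i
    have e1 : ψ i (xs i) = ‖ψ i‖ * ‖xs i‖ := by
      have h3 := (ψ i).le_opNorm (xs i)
      have h4 : ‖ψ i‖ * ‖xs i‖ ≤ b i :=
        Real.young_inequality_of_nonneg (norm_nonneg _) (norm_nonneg _) hrs.symm
      have h5 := key i
      have h6 : ψ i (xs i) ≤ ‖ψ i (xs i)‖ := le_abs_self _
      linarith
    have e2 : ‖ψ i‖ * ‖xs i‖ = b i := by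
      have h5 := key i; rw [e1] at h5; exact h5
    have hY : ‖ψ i‖ ^ s = ‖xs i‖ ^ r :=
      young_eq_s7 (norm_nonneg _) (norm_nonneg _) hrs.symm e2
    refine ⟨?_, e1⟩
    have : ‖ψ i‖ = (‖xs i‖ ^ r) ^ s⁻¹ := by
      rw [← hY, Real.rpow_rpow_inv (norm_nonneg _) hs0.ne']
    rw [this, ← Real.rpow_mul (norm_nonneg _), ← div_eq_mul_inv,
      hrs.div_conj_eq_sub_one]
  · intro h
    have hr1 : (r - 1) * s = r := hrs.sub_one_mul_conj
    have hterm : ∀ i, ‖ψ i‖ ^ s = ‖xs i‖ ^ r := by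
      intro i
      rw [(h i).1, ← Real.rpow_mul (norm_nonneg _), hr1]
    have h1 : ‖ψ‖ = 1 := by
      have hn : ‖ψ‖ ^ s = 1 := by
        rw [lp.norm_rpow_eq_tsum hs0]
        rw [tsum_congr hterm, hxsum]
      have := Real.rpow_rpow_inv (lp.norm_nonneg' ψ) hs0.ne' (y := s)
      rw [← this, hn, Real.one_rpow]
    refine ⟨h1, ?_⟩
    have : ∀ i, ψ i (xs i) = ‖xs i‖ ^ r := by
      intro i
      have hxi : (0:ℝ) < ‖xs i‖ := norm_pos_iff.mpr (hne i)
      rw [(h i).2, (h i).1, ← Real.rpow_add_one hxi.ne' (r - 1), sub_add_cancel]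
    rw [tsum_congr this, hxsum]

lemma pair_summable (hrs : p.toReal.HolderConjugate q.toReal)
    (ψ : lp (fun _ : ℕ => StrongDual ℝ X) q) (v : lp (fun _ : ℕ => X) p) :
    Summable fun i => ψ i (v i) := by
  have hmul : Summable fun i => ‖ψ i‖ * ‖v i‖ :=
    (Real.summable_mul_of_Lp_Lq_of_nonneg hrs.symm (fun i => norm_nonneg (ψ i))
      (fun i => norm_nonneg (v i)) ((lp.memℓp ψ).summable hrs.symm.pos)
      ((lp.memℓp v).summable hrs.pos))
  exact Summable.of_norm_bounded hmul fun i => (ψ i).le_opNorm (v i)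

lemma tsum_single_pair (ψ : lp (fun _ : ℕ => StrongDual ℝ X) q) (i : ℕ) (x : X) :
    ∑' j, ψ j ((lp.single p i x : lp (fun _ : ℕ => X) p) j) = ψ i x := by
  have heq : (fun j => ψ j ((lp.single p i x : lp (fun _ : ℕ => X) p) j)) =
      fun j => if j = i then ψ i x else 0 := by
    funext j
    by_cases h : j = i
    · subst h; simp [lp.single_apply_self]
    · simp [lp.single_apply_ne p i _ h, h]
  rw [heq]
  exact tsum_ite_eq i _

lemma single_add_pair (hrs : p.toReal.HolderConjugate q.toReal)
    (ψ : lp (fun _ : ℕ => StrongDual ℝ X) q) (d : StrongDual ℝ X) (i : ℕ)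
    (v : lp (fun _ : ℕ => X) p) :
    ∑' j, ((ψ + lp.single q i d : lp (fun _ : ℕ => StrongDual ℝ X) q) j) (v j)
      = (∑' j, ψ j (v j)) + d (v i) := by
  have h1 : ∀ j, ((ψ + lp.single q i d : lp (fun _ : ℕ => StrongDual ℝ X) q) j) (v j)
      = ψ j (v j) + ((lp.single q i d : lp (fun _ : ℕ => StrongDual ℝ X) q) j) (v j) := by
    intro j
    rw [lp.coeFn_add]
    rfl
  have h2 : (fun j => ((lp.single q i d : lp (fun _ : ℕ => StrongDual ℝ X) q) j) (v j))
      = fun j => if j = i then d (v i) else 0 := by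
    funext j
    by_cases h : j = i
    · subst h; simp [lp.single_apply_self]
    · simp [lp.single_apply_ne q i _ h, h]
  have hs2 : Summable fun j =>
      ((lp.single q i d : lp (fun _ : ℕ => StrongDual ℝ X) q) j) (v j) := by
    rw [h2]
    exact summable_of_ne_finset_zero (s := {i}) (by intro j hj; simp at hj; simp [hj])
  calc ∑' j, ((ψ + lp.single q i d : lp (fun _ : ℕ => StrongDual ℝ X) q) j) (v j)
      = ∑' j, (ψ j (v j)
          + ((lp.single q i d : lp (fun _ : ℕ => StrongDual ℝ X) q) j) (v j)) :=
        tsum_congr h1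
    _ = (∑' j, ψ j (v j))
          + ∑' j, ((lp.single q i d : lp (fun _ : ℕ => StrongDual ℝ X) q) j) (v j) :=
        Summable.tsum_add (pair_summable p q hrs ψ v) hs2
    _ = (∑' j, ψ j (v j)) + d (v i) := by rw [h2, tsum_ite_eq]

omit [Fact (1 ≤ q)] in
lemma single_zero (i : ℕ) :
    (lp.single q i (0 : StrongDual ℝ X) : lp (fun _ : ℕ => StrongDual ℝ X) q) = 0 := by
  exact lp.single_zero q i

end Helpers

/-- Let `(x_i) ∈ ℓ^p(X)` be a unit vector with all `x_i ≠ 0`, and let `(x_i*)` belong to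
the state space `S_{(x_i)} ⊆ ℓ^q(X*)`.  Then the identity `(S_{(x_i)}, w*) → (S_{(x_i)}, ‖·‖)`
is continuous at `(x_i*)` iff for each `i` the normalized functional `x_i*/‖x_i*‖` is a
`w*`-`‖·‖` point of continuity of the state space `S_{x_i/‖x_i‖}`. -/
theorem stmt7 {X : Type*} [NormedAddCommGroup X] [NormedSpace ℝ X] [CompleteSpace X]
    (p q : ENNReal) [Fact (1 ≤ p)] [Fact (1 ≤ q)]
    (hp : 1 < p) (hp' : p ≠ ⊤) (hpq : 1 / p + 1 / q = 1)
    (xs : lp (fun _ : ℕ => X) p) (hxs : ‖xs‖ = 1) (hne : ∀ i, xs i ≠ 0)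
    (S : Set (lp (fun _ : ℕ => StrongDual ℝ X) q))
    (hS : S = {ψ | ‖ψ‖ = 1 ∧ ∑' i, ψ i (xs i) = 1})
    (φ : lp (fun _ : ℕ => StrongDual ℝ X) q) (hφ : φ ∈ S) :
    @ContinuousWithinAt _ _ (wStarTop p q) inferInstance id S φ ↔
      ∀ i, @ContinuousWithinAt _ _ (wStarTopDual X) inferInstance id
        {g : StrongDual ℝ X | ‖g‖ = 1 ∧ g (‖xs i‖⁻¹ • xs i) = 1}
        (‖φ i‖⁻¹ • φ i) := by
  -- conjugate exponents
  have hconj : p.HolderConjugate q := ENNReal.holderConjugate_iff.mpr (by rw [← one_div, ← one_div]; exact hpq)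
  have hp0 : p ≠ 0 := @ENNReal.HolderConjugate.ne_zero p q hconj
  have hq0 : q ≠ 0 := by intro h; rw [h] at hpq; simp at hpq
  have hq' : q ≠ ⊤ := by
    intro h
    rw [h] at hpq
    simp only [ENNReal.div_top, add_zero] at hpq
    rw [ENNReal.div_eq_one_iff hp0 hp'] at hpq
    exact hp.ne' hpq.symm
  set r := p.toReal with hrdef
  set s := q.toReal with hsdef
  have hr1 : 1 < r := by
    rw [hrdef, ← ENNReal.toReal_one]
    exact (ENNReal.toReal_lt_toReal ENNReal.one_ne_top hp').mpr hp
  have hinv : r⁻¹ + s⁻¹ = 1 := by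
    have h := congrArg ENNReal.toReal (@ENNReal.HolderConjugate.inv_add_inv_eq_one p q hconj)
    rwa [ENNReal.toReal_add (by simp [hp0]) (by simp [hq0]), ENNReal.toReal_inv,
      ENNReal.toReal_inv, ENNReal.toReal_one] at h
  have hrs : r.HolderConjugate s := Real.holderConjugate_iff.mpr ⟨hr1, by simpa [one_div] using hinv⟩
  have hr0 : 0 < r := hrs.pos
  have hs0 : 0 < s := hrs.symm.pos
  have hxsumm : Summable fun i => ‖xs i‖ ^ r := (lp.memℓp xs).summable hr0
  set c : ℕ → ℝ := fun i => ‖xs i‖ ^ (r - 1) with hcdef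
  have hxpos : ∀ i, (0:ℝ) < ‖xs i‖ := fun i => norm_pos_iff.mpr (hne i)
  have hc : ∀ i, 0 < c i := fun i => Real.rpow_pos_of_pos (hxpos i) _
  have memS : ∀ ψ : lp (fun _ : ℕ => StrongDual ℝ X) q, ψ ∈ S ↔
      ∀ i, ‖ψ i‖ = c i ∧ ψ i (xs i) = ‖ψ i‖ * ‖xs i‖ := by
    intro ψ
    rw [hS]
    exact memS_iff p q hrs xs hxs hne ψ
  have hφmem := (memS φ).1 hφ
  have hφnorm : ∀ i, ‖φ i‖ = c i := fun i => (hφmem i).1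
  constructor
  · -- forward direction
    intro H i
    have H' : Tendsto id (@nhdsWithin _ (wStarTop p q) φ S) (𝓝 φ) := H
    have hci := hc i
    have hcne : c i ≠ 0 := (hc i).ne'
    set g₀ := ‖φ i‖⁻¹ • φ i with hg₀
    set Φ : StrongDual ℝ X → lp (fun _ : ℕ => StrongDual ℝ X) q :=
      fun g => φ + lp.single q i (c i • g - φ i) with hΦ
    have hsm : c i • g₀ = φ i := by
      rw [hg₀, smul_smul, hφnorm i, mul_inv_cancel₀ hcne, one_smul]
    have hΦg₀ : Φ g₀ = φ := by
      rw [hΦ]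
      simp only [hsm, sub_self, single_zero, add_zero]
    have hΦap_i : ∀ g, (Φ g : ∀ _, StrongDual ℝ X) i = c i • g := by
      intro g
      rw [hΦ]
      simp only [lp.coeFn_add, Pi.add_apply, lp.single_apply_self]
      abel
    have hΦap_ne : ∀ g j, j ≠ i → (Φ g : ∀ _, StrongDual ℝ X) j = φ j := by
      intro g j hj
      rw [hΦ]
      simp only [lp.coeFn_add, Pi.add_apply, lp.single_apply_ne q i _ hj, add_zero]
    have hmaps : Set.MapsTo Φ
        {g : StrongDual ℝ X | ‖g‖ = 1 ∧ g (‖xs i‖⁻¹ • xs i) = 1} S := by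
      rintro g ⟨hg1, hg2⟩
      have hgx : g (xs i) = ‖xs i‖ := by
        rw [map_smul, smul_eq_mul, inv_mul_eq_one₀ (hxpos i).ne'] at hg2
        exact hg2.symm
      rw [memS]
      intro j
      by_cases hj : j = i
      · subst hj
        rw [hΦap_i g]
        constructor
        · rw [norm_smul, Real.norm_eq_abs, abs_of_pos hci, hg1, mul_one]
        · rw [ContinuousLinearMap.smul_apply, hgx, norm_smul, Real.norm_eq_abs,
            abs_of_pos hci, hg1, mul_one, smul_eq_mul]
      · rw [hΦap_ne g j hj]
        exact hφmem j
    have hcontΦ : @Continuous _ _ (wStarTopDual X) (wStarTop p q) Φ := by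
      apply pairing_continuous_rng
      intro v
      have heq : (fun g : StrongDual ℝ X =>
            ∑' j, ((Φ g : lp (fun _ : ℕ => StrongDual ℝ X) q) j) (v j))
          = fun g => ((∑' j, φ j (v j)) - φ i (v i)) + c i * g (v i) := by
        funext g
        rw [hΦ]
        rw [single_add_pair p q hrs φ (c i • g - φ i) i v]
        simp only [ContinuousLinearMap.sub_apply, ContinuousLinearMap.smul_apply, smul_eq_mul]
        ring
      show @Continuous _ _ (wStarTopDual X) _
        (fun g => ∑' j, ((Φ g : lp (fun _ : ℕ => StrongDual ℝ X) q) j) (v j))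
      rw [heq]
      exact pairing_continuous_affine (fun (g : StrongDual ℝ X) (x : X) => g x) (v i)
        ((∑' j, φ j (v j)) - φ i (v i)) (c i)
    have htend1 : Tendsto Φ (@nhdsWithin _ (wStarTopDual X) g₀
          {g : StrongDual ℝ X | ‖g‖ = 1 ∧ g (‖xs i‖⁻¹ • xs i) = 1})
        (@nhdsWithin _ (wStarTop p q) φ S) := by
      have := tendstoWithin_of_cont hcontΦ hmaps g₀
      rwa [hΦg₀] at this
    have htend2 : Tendsto Φ (@nhdsWithin _ (wStarTopDual X) g₀
          {g : StrongDual ℝ X | ‖g‖ = 1 ∧ g (‖xs i‖⁻¹ • xs i) = 1}) (𝓝 φ) :=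
      H'.comp htend1
    have hnorm0 : Tendsto (fun g => ‖Φ g - φ‖) (@nhdsWithin _ (wStarTopDual X) g₀
          {g : StrongDual ℝ X | ‖g‖ = 1 ∧ g (‖xs i‖⁻¹ • xs i) = 1}) (𝓝 0) :=
      tendsto_iff_norm_sub_tendsto_zero.mp htend2
    have hns : ∀ g, ‖Φ g - φ‖ = c i * ‖g - g₀‖ := by
      intro g
      have h1 : Φ g - φ = lp.single q i (c i • g - φ i) := by
        rw [hΦ, add_sub_cancel_left]
      rw [h1]
      have h2 := lp.norm_single (E := fun _ : ℕ => StrongDual ℝ X) (pos_iff_ne_zero.mpr hq0) i (c i • g - φ i)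
      rw [h2, ← hsm, ← smul_sub (c i) g g₀, norm_smul, Real.norm_eq_abs, abs_of_pos hci]
    have hnorm0' : Tendsto (fun g => c i * ‖g - g₀‖) (@nhdsWithin _ (wStarTopDual X) g₀
          {g : StrongDual ℝ X | ‖g‖ = 1 ∧ g (‖xs i‖⁻¹ • xs i) = 1}) (𝓝 0) := by
      have : (fun g => ‖Φ g - φ‖) = fun g => c i * ‖g - g₀‖ := funext hns
      rwa [this] at hnorm0
    show Tendsto id (@nhdsWithin _ (wStarTopDual X) g₀
        {g : StrongDual ℝ X | ‖g‖ = 1 ∧ g (‖xs i‖⁻¹ • xs i) = 1}) (𝓝 g₀)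
    rw [tendsto_iff_norm_sub_tendsto_zero]
    have h3 := hnorm0'.const_mul (c i)⁻¹
    rw [mul_zero] at h3
    simpa [inv_mul_cancel_left₀ hcne] using h3
  · -- backward direction
    intro hcoord
    have hti : ∀ i, Tendsto (fun ψ : lp (fun _ : ℕ => StrongDual ℝ X) q =>
        (ψ : ∀ _, StrongDual ℝ X) i) (@nhdsWithin _ (wStarTop p q) φ S) (𝓝 (φ i)) := by
      intro i
      have hcne : c i ≠ 0 := (hc i).ne'
      set Ψ : lp (fun _ : ℕ => StrongDual ℝ X) q → StrongDual ℝ X :=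
        fun ψ => (c i)⁻¹ • ψ i with hΨ
      have hcont : @Continuous _ _ (wStarTop p q) (wStarTopDual X) Ψ := by
        apply pairing_continuous_rng
        intro x
        have heq : (fun ψ : lp (fun _ : ℕ => StrongDual ℝ X) q => (Ψ ψ) x)
            = fun ψ => (c i)⁻¹
                * (∑' j, ψ j ((lp.single p i x : lp (fun _ : ℕ => X) p) j)) := by
          funext ψ
          rw [tsum_single_pair]
          simp [hΨ]
        show @Continuous _ _ (wStarTop p q) _
          (fun ψ : lp (fun _ : ℕ => StrongDual ℝ X) q => (Ψ ψ) x)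
        rw [heq]
        exact pairing_continuous_const_mul
          (fun (ψ : lp (fun _ : ℕ => StrongDual ℝ X) q)
            (v : lp (fun _ : ℕ => X) p) => ∑' j, ψ j (v j)) (lp.single p i x) (c i)⁻¹
      have hmapsΨ : Set.MapsTo Ψ S
          {g : StrongDual ℝ X | ‖g‖ = 1 ∧ g (‖xs i‖⁻¹ • xs i) = 1} := by
        intro ψ hψ
        have hmem := (memS ψ).1 hψ i
        have hx0 : ‖xs i‖ ≠ 0 := (hxpos i).ne'
        constructor
        · show ‖(c i)⁻¹ • ψ i‖ = 1
          rw [norm_smul, hmem.1, Real.norm_eq_abs, abs_of_pos (inv_pos.mpr (hc i)),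
            inv_mul_cancel₀ hcne]
        · show ((c i)⁻¹ • ψ i) (‖xs i‖⁻¹ • xs i) = 1
          rw [ContinuousLinearMap.smul_apply, map_smul, smul_eq_mul, smul_eq_mul,
            hmem.2, hmem.1]
          field_simp
      have h1 := tendstoWithin_of_cont hcont hmapsΨ φ
      have hΨφ : Ψ φ = ‖φ i‖⁻¹ • φ i := by
        rw [hΨ, hφnorm i]
      rw [hΨφ] at h1
      have hcw : Tendsto id (@nhdsWithin _ (wStarTopDual X) (‖φ i‖⁻¹ • φ i)
          {g : StrongDual ℝ X | ‖g‖ = 1 ∧ g (‖xs i‖⁻¹ • xs i) = 1})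
          (𝓝 (‖φ i‖⁻¹ • φ i)) := hcoord i
      have h2 := Filter.Tendsto.comp hcw h1
      have h3 := h2.const_smul (c i)
      have hpt : c i • (‖φ i‖⁻¹ • φ i) = φ i := by
        rw [hφnorm i, smul_smul, mul_inv_cancel₀ hcne, one_smul]
      rw [hpt] at h3
      have heq2 : (fun ψ : lp (fun _ : ℕ => StrongDual ℝ X) q => c i • (id ∘ Ψ) ψ)
          = fun ψ : lp (fun _ : ℕ => StrongDual ℝ X) q =>
            (ψ : ∀ _, StrongDual ℝ X) i := by
        funext ψ
        simp [Function.comp, hΨ, smul_smul, mul_inv_cancel₀ hcne]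
      rwa [heq2] at h3
    have main : Tendsto (id : lp (fun _ : ℕ => StrongDual ℝ X) q →
        lp (fun _ : ℕ => StrongDual ℝ X) q)
        (@nhdsWithin _ (wStarTop p q) φ S) (𝓝 φ) := by
      rw [Metric.tendsto_nhds]
      intro ε hε
      have htail : Tendsto (fun N => ∑' j, ‖xs (j + N)‖ ^ r) atTop (𝓝 0) :=
        tendsto_sum_nat_add (f := fun n => ‖xs n‖ ^ r)
      have hεs : (0:ℝ) < ε ^ s / 2 / 2 ^ s := by positivity
      obtain ⟨N, hN⟩ := (htail.eventually_lt_const hεs).exists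
      set δ := (ε ^ s / (2 * ((N:ℝ) + 1))) ^ s⁻¹ with hδ
      have hδpos : 0 < δ := by positivity
      have hδs : δ ^ s = ε ^ s / (2 * ((N:ℝ) + 1)) :=
        Real.rpow_inv_rpow (by positivity) hs0.ne'
      have E1 : ∀ᶠ ψ in @nhdsWithin _ (wStarTop p q) φ S, ψ ∈ S :=
        @self_mem_nhdsWithin _ (wStarTop p q) φ S
      have E2 : ∀ᶠ (ψ : lp (fun _ : ℕ => StrongDual ℝ X) q)
          in @nhdsWithin _ (wStarTop p q) φ S,
          ∀ i ∈ Finset.range N, ‖(ψ : ∀ _, StrongDual ℝ X) i - φ i‖ < δ := by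
        rw [eventually_all_finset]
        intro i _
        have h := Metric.tendsto_nhds.mp (hti i) δ hδpos
        simpa [dist_eq_norm] using h
      filter_upwards [E1, E2] with ψ hψS hψδ
      rw [id, dist_eq_norm]
      have hψmem := (memS ψ).1 hψS
      have hsub : Summable fun j =>
          ‖((ψ - φ : lp (fun _ : ℕ => StrongDual ℝ X) q) : ∀ _, StrongDual ℝ X) j‖ ^ s :=
        (lp.memℓp (ψ - φ)).summable hs0
      have happ : ∀ j,
          ((ψ - φ : lp (fun _ : ℕ => StrongDual ℝ X) q) : ∀ _, StrongDual ℝ X) j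
            = ψ j - φ j := by
        intro j
        rw [lp.coeFn_sub]
        rfl
      have key : ‖ψ - φ‖ ^ s < ε ^ s := by
        rw [lp.norm_rpow_eq_tsum hs0, ← hsub.sum_add_tsum_nat_add N]
        have hhead : ∑ j ∈ Finset.range N,
            ‖((ψ - φ : lp (fun _ : ℕ => StrongDual ℝ X) q)
              : ∀ _, StrongDual ℝ X) j‖ ^ s ≤ ε ^ s / 2 := by
          calc ∑ j ∈ Finset.range N,
              ‖((ψ - φ : lp (fun _ : ℕ => StrongDual ℝ X) q)
                : ∀ _, StrongDual ℝ X) j‖ ^ s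
              ≤ ∑ _j ∈ Finset.range N, δ ^ s := by
                apply Finset.sum_le_sum
                intro j hj
                rw [happ j]
                exact Real.rpow_le_rpow (norm_nonneg _) (le_of_lt (hψδ j hj)) hs0.le
            _ = (N:ℝ) * δ ^ s := by
                rw [Finset.sum_const, Finset.card_range, nsmul_eq_mul]
            _ ≤ ε ^ s / 2 := by
                rw [hδs]
                have hA : (0:ℝ) ≤ ε ^ s := by positivity
                have hd : (0:ℝ) < (N:ℝ) + 1 := by positivity
                rw [mul_div_assoc', div_le_div_iff₀ (by positivity) (by norm_num)]
                nlinarith [hA, hd]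
        have htailb : ∑' j,
            ‖((ψ - φ : lp (fun _ : ℕ => StrongDual ℝ X) q)
              : ∀ _, StrongDual ℝ X) (j + N)‖ ^ s < ε ^ s / 2 := by
          have hsum2 : Summable fun j => 2 ^ s * ‖xs (j + N)‖ ^ r :=
            ((summable_nat_add_iff N).mpr hxsumm).mul_left _
          have hle : ∀ j,
              ‖((ψ - φ : lp (fun _ : ℕ => StrongDual ℝ X) q)
                : ∀ _, StrongDual ℝ X) (j + N)‖ ^ s ≤ 2 ^ s * ‖xs (j + N)‖ ^ r := by
            intro j
            rw [happ (j + N)]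
            have hb : ‖ψ (j + N) - φ (j + N)‖ ≤ 2 * ‖xs (j + N)‖ ^ (r - 1) := by
              calc ‖ψ (j + N) - φ (j + N)‖ ≤ ‖ψ (j + N)‖ + ‖φ (j + N)‖ := norm_sub_le _ _
                _ = 2 * ‖xs (j + N)‖ ^ (r - 1) := by
                    rw [(hψmem (j + N)).1, (hφmem (j + N)).1]; rw [hcdef]; ring
            calc ‖ψ (j + N) - φ (j + N)‖ ^ s ≤ (2 * ‖xs (j + N)‖ ^ (r - 1)) ^ s :=
                  Real.rpow_le_rpow (norm_nonneg _) hb hs0.le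
              _ = 2 ^ s * ‖xs (j + N)‖ ^ r := by
                  rw [Real.mul_rpow (by norm_num) (Real.rpow_nonneg (norm_nonneg _) _),
                    ← Real.rpow_mul (norm_nonneg _), hrs.sub_one_mul_conj]
          calc ∑' j, ‖((ψ - φ : lp (fun _ : ℕ => StrongDual ℝ X) q)
                : ∀ _, StrongDual ℝ X) (j + N)‖ ^ s
              ≤ ∑' j, 2 ^ s * ‖xs (j + N)‖ ^ r :=
                Summable.tsum_le_tsum hle ((summable_nat_add_iff N).mpr hsub) hsum2
            _ = 2 ^ s * ∑' j, ‖xs (j + N)‖ ^ r := tsum_mul_left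
            _ < 2 ^ s * (ε ^ s / 2 / 2 ^ s) :=
                mul_lt_mul_of_pos_left hN (Real.rpow_pos_of_pos two_pos s)
            _ = ε ^ s / 2 := by
                field_simp
        linarith
      by_contra hcon
      push_neg at hcon
      exact absurd key (not_lt.mpr (Real.rpow_le_rpow hε.le hcon hs0.le))

    exact main
end

section
/- Let 1 < p < ∞ and (x_i) ∈ ℓ^p(X) with ‖(x_i)‖_p = 1. Then S_{(x_i)} is norm compact in ℓ^q(X*) if and only if for each i ∈ ℕ with x_i ≠ 0, the state space S_{x_i/‖x_i‖} is norm compact in X*. -/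
open NormedSpace

lemma young_eq_aux {p q : ℝ} (hpq : p.HolderConjugate q) {a b : ℝ} (ha : 0 ≤ a) (hb : 0 ≤ b)
    (h : a * b = a ^ p / p + b ^ q / q) : a ^ p = b ^ q := by
  rcases ha.eq_or_lt with rfl | ha'
  · rw [Real.zero_rpow hpq.ne_zero] at h ⊢
    rw [zero_mul, zero_div, zero_add] at h
    have hq : 0 < q := hpq.symm.pos
    have hb0 : b ^ q = 0 := by
      field_simp at h
      linarith
    exact hb0.symm
  rcases hb.eq_or_lt with rfl | hb'
  · rw [Real.zero_rpow hpq.symm.ne_zero] at h ⊢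
    rw [mul_zero, zero_div, add_zero] at h
    have hp : 0 < p := hpq.pos
    field_simp at h
    linarith
  by_contra hne
  have hs : Real.log a * p ≠ Real.log b * q := by
    intro hst
    apply hne
    rw [Real.rpow_def_of_pos ha', Real.rpow_def_of_pos hb', hst]
  have key := strictConvexOn_exp.2 (Set.mem_univ (Real.log a * p)) (Set.mem_univ (Real.log b * q))
    hs hpq.inv_pos hpq.symm.inv_pos hpq.inv_add_inv_eq_one
  rw [smul_eq_mul, smul_eq_mul, smul_eq_mul, smul_eq_mul] at key
  have e1 : p⁻¹ * (Real.log a * p) + q⁻¹ * (Real.log b * q) = Real.log a + Real.log b := by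
    field_simp [hpq.ne_zero, hpq.symm.ne_zero]
  have e2 : Real.exp (Real.log a + Real.log b) = a * b := by
    rw [Real.exp_add, Real.exp_log ha', Real.exp_log hb']
  rw [e1, e2, ← Real.rpow_def_of_pos ha', ← Real.rpow_def_of_pos hb', h,
    div_eq_inv_mul, div_eq_inv_mul] at key
  exact lt_irrefl _ key

section Aux

variable {X : Type*} [NormedAddCommGroup X] [NormedSpace ℝ X]
variable {p q : ENNReal} [Fact (1 ≤ p)] [Fact (1 ≤ q)]
variable {p' q' : ℝ}

lemma stmt9_normK (hpq' : p'.HolderConjugate q') {x : X} {g : StrongDual ℝ X}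
    (hg : ‖g‖ = ‖x‖ ^ (p' - 1)) : ‖g‖ ^ q' = ‖x‖ ^ p' := by
  rw [hg, ← Real.rpow_mul (norm_nonneg _), hpq'.sub_one_mul_conj]

lemma stmt9_Kne (hpq' : p'.HolderConjugate q') (x : X) :
    ∃ g : StrongDual ℝ X, ‖g‖ = ‖x‖ ^ (p' - 1) ∧ g x = ‖x‖ ^ p' := by
  rcases eq_or_ne x 0 with h0 | h0
  · refine ⟨0, ?_, ?_⟩
    · rw [h0, norm_zero, norm_zero,
        Real.zero_rpow (by linarith [hpq'.lt] : p' - 1 ≠ 0)]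
    · rw [h0, norm_zero, Real.zero_rpow hpq'.ne_zero]
      simp
  · obtain ⟨g0, hg0n, hg0v⟩ := exists_dual_vector ℝ x (norm_ne_zero_iff.mpr h0)
    have hpos : (0:ℝ) < ‖x‖ := norm_pos_iff.mpr h0
    refine ⟨(‖x‖ ^ (p' - 1)) • g0, ?_, ?_⟩
    · rw [norm_smul, hg0n, mul_one, Real.norm_eq_abs,
        abs_of_nonneg (Real.rpow_nonneg (norm_nonneg _) _)]
    · simp only [ContinuousLinearMap.smul_apply, hg0v]
      rw [smul_eq_mul]
      have hco : (RCLike.ofReal ‖x‖ : ℝ) = ‖x‖ := rfl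
      rw [hco, ← Real.rpow_add_one hpos.ne']
      ring_nf

lemma stmt9_mem (hq'def : q' = q.toReal) (hpq' : p'.HolderConjugate q')
    (xs : lp (fun _ : ℕ => X) p) (hB : HasSum (fun i => ‖xs i‖ ^ p') 1)
    (ψ : lp (fun _ : ℕ => StrongDual ℝ X) q) :
    (‖ψ‖ = 1 ∧ ∑' i, ψ i (xs i) = 1) ↔
      ∀ i, ‖ψ i‖ = ‖xs i‖ ^ (p' - 1) ∧ ψ i (xs i) = ‖xs i‖ ^ p' := by
  have hq'pos : 0 < q.toReal := hq'def ▸ hpq'.symm.pos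
  constructor
  · rintro ⟨hn, hsum⟩
    have hA : HasSum (fun i => ‖ψ i‖ ^ q') 1 := by
      have := lp.hasSum_norm hq'pos ψ
      rw [hn, Real.one_rpow, ← hq'def] at this
      exact this
    have hf : Summable (fun i => ψ i (xs i)) := by
      by_contra hsc
      rw [tsum_eq_zero_of_not_summable hsc] at hsum
      norm_num at hsum
    have hRHS : HasSum (fun i => ‖ψ i‖ ^ q' / q' + ‖xs i‖ ^ p' / p') 1 := by
      have h2 := (hA.div_const q').add (hB.div_const p')
      have h3 : 1 / q' + 1 / p' = 1 := by
        rw [add_comm, one_div, one_div]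
        exact hpq'.inv_add_inv_eq_one
      rwa [h3] at h2
    have hub : ∀ i, ψ i (xs i) ≤ ‖ψ i‖ * ‖xs i‖ := by
      intro i
      calc ψ i (xs i) ≤ ‖ψ i (xs i)‖ := le_abs_self _
        _ ≤ ‖ψ i‖ * ‖xs i‖ := (ψ i).le_opNorm _
    have hyoung : ∀ i, ‖ψ i‖ * ‖xs i‖ ≤ ‖ψ i‖ ^ q' / q' + ‖xs i‖ ^ p' / p' :=
      fun i => Real.young_inequality_of_nonneg (norm_nonneg _) (norm_nonneg _) hpq'.symm
    set u : ℕ → ℝ := fun i => (‖ψ i‖ ^ q' / q' + ‖xs i‖ ^ p' / p') - ψ i (xs i) with hu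
    have hunn : ∀ i, 0 ≤ u i := fun i => by
      have := (hub i).trans (hyoung i)
      simp only [hu, sub_nonneg]
      exact this
    have husum : Summable u := hRHS.summable.sub hf
    have hts : ∑' i, u i = 0 := by
      rw [Summable.tsum_sub hRHS.summable hf, hRHS.tsum_eq, hsum, sub_self]
    have hzero : ∀ i, u i = 0 := by
      intro i
      refine le_antisymm ?_ (hunn i)
      have := Summable.le_tsum husum i (fun j _ => hunn j)
      rwa [hts] at this
    intro i
    have heq : ψ i (xs i) = ‖ψ i‖ ^ q' / q' + ‖xs i‖ ^ p' / p' := by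
      have := hzero i
      simp only [hu, sub_eq_zero] at this
      exact this.symm
    have hprod : ‖ψ i‖ * ‖xs i‖ = ‖ψ i‖ ^ q' / q' + ‖xs i‖ ^ p' / p' :=
      le_antisymm (hyoung i) (heq ▸ hub i)
    have hkey : ‖ψ i‖ ^ q' = ‖xs i‖ ^ p' :=
      young_eq_aux hpq'.symm (norm_nonneg _) (norm_nonneg _) hprod
    have hnψ : ‖ψ i‖ = ‖xs i‖ ^ (p' - 1) := by
      have h1 : ‖ψ i‖ = (‖xs i‖ ^ p') ^ q'⁻¹ := by
        rw [← hkey, Real.rpow_rpow_inv (norm_nonneg _) (hq'def ▸ hq'pos).ne']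
      rw [h1, ← Real.rpow_mul (norm_nonneg _)]
      congr 1
      have h2 := hpq'.div_conj_eq_sub_one
      rw [div_eq_mul_inv] at h2
      exact h2
    refine ⟨hnψ, ?_⟩
    have hval : ψ i (xs i) = ‖ψ i‖ * ‖xs i‖ := by rw [hprod, heq]
    rw [hval, hnψ]
    rcases eq_or_ne (xs i) 0 with h0 | h0
    · rw [h0]
      simp only [norm_zero]
      rw [Real.zero_rpow (by linarith [hpq'.lt] : p' - 1 ≠ 0),
        Real.zero_rpow hpq'.ne_zero, zero_mul]
    · have hpos : (0:ℝ) < ‖xs i‖ := norm_pos_iff.mpr h0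
      rw [← Real.rpow_add_one hpos.ne']
      ring_nf
  · intro hKmem
    have hAA : HasSum (fun i => ‖ψ i‖ ^ q') 1 := by
      have he : (fun i => ‖ψ i‖ ^ q') = fun i => ‖xs i‖ ^ p' :=
        funext fun i => stmt9_normK hpq' (hKmem i).1
      rw [he]
      exact hB
    constructor
    · have h1 := lp.norm_rpow_eq_tsum hq'pos ψ
      rw [← hq'def, hAA.tsum_eq] at h1
      have h2 := congrArg (fun x : ℝ => x ^ q'⁻¹) h1
      simpa [Real.rpow_rpow_inv (norm_nonneg _) (hq'def ▸ hq'pos).ne',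
        Real.one_rpow] using h2
    · have he : (fun i => ψ i (xs i)) = fun i => ‖xs i‖ ^ p' :=
        funext fun i => (hKmem i).2
      rw [he, hB.tsum_eq]

lemma stmt9_forward (hq0 : q ≠ 0) (hq'def : q' = q.toReal) (hpq' : p'.HolderConjugate q')
    (xs : lp (fun _ : ℕ => X) p) (hB : HasSum (fun i => ‖xs i‖ ^ p') 1)
    (hS : IsCompact {ψ : lp (fun _ : ℕ => StrongDual ℝ X) q | ‖ψ‖ = 1 ∧ ∑' j, ψ j (xs j) = 1})
    (i : ℕ) (hne : xs i ≠ 0) :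
    IsCompact {g : StrongDual ℝ X | ‖g‖ = 1 ∧ g (‖xs i‖⁻¹ • xs i) = 1} := by
  classical
  have hbpos : (0:ℝ) < ‖xs i‖ := norm_pos_iff.mpr hne
  set r := ‖xs i‖ ^ (p' - 1) with hrdef
  have hrpos : 0 < r := Real.rpow_pos_of_pos hbpos _
  have hrb : r * ‖xs i‖ = ‖xs i‖ ^ p' := by
    rw [hrdef, ← Real.rpow_add_one hbpos.ne']
    ring_nf
  have hev : Continuous fun ψ : lp (fun _ : ℕ => StrongDual ℝ X) q => (ψ i : StrongDual ℝ X) := by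
    have hlip : LipschitzWith 1 (fun ψ : lp (fun _ : ℕ => StrongDual ℝ X) q => (ψ i : StrongDual ℝ X)) := by
      apply LipschitzWith.mk_one
      intro ψ φ
      rw [dist_eq_norm, dist_eq_norm]
      have h1 : (ψ i : StrongDual ℝ X) - φ i = (ψ - φ) i := by rw [lp.coeFn_sub]; rfl
      rw [h1]
      exact lp.norm_apply_le_norm hq0 _ i
    exact hlip.continuous
  have hcont : Continuous fun ψ : lp (fun _ : ℕ => StrongDual ℝ X) q => r⁻¹ • (ψ i : StrongDual ℝ X) :=
    (continuous_const_smul r⁻¹).comp hev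
  have himg : {g : StrongDual ℝ X | ‖g‖ = 1 ∧ g (‖xs i‖⁻¹ • xs i) = 1}
      = (fun ψ : lp (fun _ : ℕ => StrongDual ℝ X) q => r⁻¹ • (ψ i : StrongDual ℝ X)) ''
        {ψ | ‖ψ‖ = 1 ∧ ∑' j, ψ j (xs j) = 1} := by
    ext g
    constructor
    · rintro ⟨hgn, hgv⟩
      choose φ hφ1 hφ2 using fun j => stmt9_Kne (q' := q') hpq' (xs j)
      set f : ∀ _ : ℕ, StrongDual ℝ X := Function.update φ i (r • g) with hfdef
      have hgx : g (xs i) = ‖xs i‖ := by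
        have h := hgv
        rw [map_smul, smul_eq_mul] at h
        field_simp at h
        linarith
      have hfK : ∀ j, ‖f j‖ = ‖xs j‖ ^ (p' - 1) ∧ f j (xs j) = ‖xs j‖ ^ p' := by
        intro j
        rcases eq_or_ne j i with rfl | hji
        · rw [hfdef, Function.update_self]
          constructor
          · rw [norm_smul, hgn, mul_one, Real.norm_eq_abs, abs_of_nonneg hrpos.le]
          · simp only [ContinuousLinearMap.smul_apply]
            rw [smul_eq_mul, hgx, hrb]
        · rw [hfdef, Function.update_of_ne hji]
          exact ⟨hφ1 j, hφ2 j⟩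
      have hfmem : Memℓp f q := by
        apply memℓp_gen
        have he : (fun j => ‖f j‖ ^ q.toReal) = fun j => ‖xs j‖ ^ p' := by
          funext j
          rw [← hq'def]
          exact stmt9_normK hpq' (hfK j).1
        rw [he]
        exact hB.summable
      refine ⟨⟨f, hfmem⟩, (stmt9_mem hq'def hpq' xs hB _).mpr (fun j => hfK j), ?_⟩
      have hco : ((⟨f, hfmem⟩ : lp (fun _ : ℕ => StrongDual ℝ X) q) i : StrongDual ℝ X) = f i := rfl
      show r⁻¹ • ((⟨f, hfmem⟩ : lp (fun _ : ℕ => StrongDual ℝ X) q) i : StrongDual ℝ X) = g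
      rw [hco, hfdef, Function.update_self, smul_smul, inv_mul_cancel₀ hrpos.ne', one_smul]
    · rintro ⟨ψ, hψS, rfl⟩
      have hKi := (stmt9_mem hq'def hpq' xs hB ψ).mp hψS i
      constructor
      · rw [norm_smul, hKi.1, Real.norm_eq_abs, abs_of_nonneg (inv_nonneg.mpr hrpos.le),
          ← hrdef, inv_mul_cancel₀ hrpos.ne']
      · simp only [ContinuousLinearMap.smul_apply, map_smul, smul_eq_mul]
        rw [hKi.2, ← hrb]
        field_simp
  rw [himg]
  exact hS.image hcont

lemma stmt9_tail (hpq' : p'.HolderConjugate q')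
    (xs : lp (fun _ : ℕ => X) p) (hB : HasSum (fun i => ‖xs i‖ ^ p') 1) (N : ℕ)
    (g f : ∀ _ : ℕ, StrongDual ℝ X)
    (hg : ∀ j, ‖g j‖ = ‖xs j‖ ^ (p' - 1)) (hf : ∀ j, ‖f j‖ = ‖xs j‖ ^ (p' - 1))
    (hD : Summable fun j => ‖g j - f j‖ ^ q') :
    ∑' k, ‖g (k+N) - f (k+N)‖ ^ q' ≤ (2:ℝ)^q' * ∑' k, ‖xs (k+N)‖ ^ p' := by
  have hq'pos : 0 < q' := hpq'.symm.pos
  rw [← tsum_mul_left]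
  refine Summable.tsum_le_tsum (fun k => ?_) ((summable_nat_add_iff N).mpr hD)
    (((summable_nat_add_iff N).mpr hB.summable).mul_left _)
  have h1 : ‖g (k+N) - f (k+N)‖ ≤ 2 * ‖xs (k+N)‖ ^ (p'-1) := by
    calc ‖g (k+N) - f (k+N)‖ ≤ ‖g (k+N)‖ + ‖f (k+N)‖ := norm_sub_le _ _
      _ = 2 * ‖xs (k+N)‖ ^ (p'-1) := by
          rw [hg (k+N), hf (k+N)]
          ring
  calc ‖g (k+N) - f (k+N)‖ ^ q' ≤ (2 * ‖xs (k+N)‖ ^ (p'-1)) ^ q' :=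
        Real.rpow_le_rpow (norm_nonneg _) h1 hq'pos.le
    _ = (2:ℝ)^q' * (‖xs (k+N)‖ ^ (p'-1)) ^ q' :=
        Real.mul_rpow (by norm_num) (Real.rpow_nonneg (norm_nonneg _) _)
    _ = (2:ℝ)^q' * ‖xs (k+N)‖ ^ p' := by
        rw [← Real.rpow_mul (norm_nonneg _), hpq'.sub_one_mul_conj]

set_option maxHeartbeats 1000000 in
lemma stmt9_cont (hq'def : q' = q.toReal) (hpq' : p'.HolderConjugate q')
    (xs : lp (fun _ : ℕ => X) p) (hB : HasSum (fun i => ‖xs i‖ ^ p') 1)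
    (Phi : (∀ _ : ℕ, StrongDual ℝ X) → lp (fun _ : ℕ => StrongDual ℝ X) q)
    (T : Set (∀ _ : ℕ, StrongDual ℝ X))
    (hTK : ∀ f ∈ T, ∀ j, ‖f j‖ = ‖xs j‖ ^ (p' - 1))
    (hTm : ∀ f ∈ T, Memℓp f q)
    (hPhival : ∀ f (h : Memℓp f q), Phi f = ⟨f, h⟩) :
    ContinuousOn Phi T := by
  have hq'pos : 0 < q' := hpq'.symm.pos
  intro f hfT
  have hfm : Memℓp f q := hTm f hfT
  have htend : Filter.Tendsto Phi (nhdsWithin f T) (nhds (Phi f)) := by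
    rw [Metric.tendsto_nhds]
    intro ε hε
    have htail := tendsto_sum_nat_add (fun j => ‖xs j‖ ^ p')
    have hEpos : 0 < (ε/2)^q' / (2 * (2:ℝ)^q') := by positivity
    obtain ⟨N, hN⟩ := (htail.eventually (gt_mem_nhds hEpos)).exists
    set δ := ((ε/2)^q' / (2*((N:ℝ)+1)))^(q'⁻¹) with hδdef
    have hδpos : 0 < δ := by positivity
    have hδq : δ ^ q' = (ε/2)^q' / (2*((N:ℝ)+1)) :=
      Real.rpow_inv_rpow (by positivity) hq'pos.ne'
    have hUmem : (⋂ k ∈ Finset.range N,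
        {g : ∀ _ : ℕ, StrongDual ℝ X | dist (g k) (f k) < δ}) ∈ nhdsWithin f T := by
      apply mem_nhdsWithin_of_mem_nhds
      have hUopen : IsOpen (⋂ k ∈ Finset.range N,
          {g : ∀ _ : ℕ, StrongDual ℝ X | dist (g k) (f k) < δ}) := by
        apply isOpen_biInter_finset
        intro k _
        have hset : {g : ∀ _ : ℕ, StrongDual ℝ X | dist (g k) (f k) < δ}
            = (fun g : ∀ _ : ℕ, StrongDual ℝ X => g k) ⁻¹' Metric.ball (f k) δ := rfl
        rw [hset]
        exact Metric.isOpen_ball.preimage (continuous_apply k)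
      apply hUopen.mem_nhds
      apply Set.mem_iInter₂.mpr
      intro k _
      simpa using hδpos
    filter_upwards [hUmem, self_mem_nhdsWithin] with g hgU hgT
    have hgU' : ∀ k ∈ Finset.range N, dist (g k) (f k) < δ :=
      fun k hk => Set.mem_iInter₂.mp hgU k hk
    have hgm : Memℓp g q := hTm g hgT
    have hgf : Memℓp (g - f) q := hgm.sub hfm
    have hD : Summable (fun j => ‖g j - f j‖ ^ q') := by
      have h5 := hgf.summable (hq'def ▸ hq'pos)
      rw [← hq'def] at h5
      exact h5
    have hdist_pow : dist (Phi g) (Phi f) ^ q' = ∑' j, ‖g j - f j‖ ^ q' := by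
      rw [hPhival g hgm, hPhival f hfm, dist_eq_norm, hq'def,
        lp.norm_rpow_eq_tsum (hq'def ▸ hq'pos)]
      rw [← hq'def]
      exact tsum_congr fun j => rfl
    have hsplit := Summable.sum_add_tsum_nat_add N hD
    have hhead : ∑ k ∈ Finset.range N, ‖g k - f k‖ ^ q' ≤ (N:ℝ) * δ ^ q' := by
      have hb : ∀ k ∈ Finset.range N, ‖g k - f k‖ ^ q' ≤ δ ^ q' := by
        intro k hk
        apply Real.rpow_le_rpow (norm_nonneg _) _ hq'pos.le
        rw [← dist_eq_norm]
        exact (hgU' k hk).le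
      calc ∑ k ∈ Finset.range N, ‖g k - f k‖ ^ q'
          ≤ (Finset.range N).card • (δ ^ q') := Finset.sum_le_card_nsmul _ _ _ hb
        _ = (N:ℝ) * δ ^ q' := by
            rw [Finset.card_range, nsmul_eq_mul]
    have htailb : ∑' k, ‖g (k+N) - f (k+N)‖ ^ q' ≤ (2:ℝ)^q' * ∑' k, ‖xs (k+N)‖ ^ p' :=
      stmt9_tail hpq' xs hB N g f (fun j => hTK g hgT j) (fun j => hTK f hfT j) hD
    have hA0 : (0:ℝ) < (ε/2)^q' := by positivity
    have hNδ : (N:ℝ) * δ ^ q' ≤ (ε/2)^q' / 2 := by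
      rw [hδq, ← mul_div_assoc, div_le_div_iff₀ (by positivity) (by norm_num)]
      have hN0 : (0:ℝ) ≤ (N:ℝ) := Nat.cast_nonneg N
      nlinarith
    have htail2 : (2:ℝ)^q' * ∑' k, ‖xs (k+N)‖ ^ p' < (ε/2)^q' / 2 := by
      have h2q : (0:ℝ) < (2:ℝ)^q' := by positivity
      calc (2:ℝ)^q' * ∑' k, ‖xs (k+N)‖ ^ p'
          < (2:ℝ)^q' * ((ε/2)^q' / (2 * (2:ℝ)^q')) := mul_lt_mul_of_pos_left hN h2q
        _ = (ε/2)^q' / 2 := by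
            field_simp
    have hsum_lt : dist (Phi g) (Phi f) ^ q' < (ε/2)^q' := by
      rw [hdist_pow, ← hsplit]
      have h6 := htailb.trans_lt htail2
      linarith
    have hd2 : dist (Phi g) (Phi f) < ε/2 := by
      by_contra hge
      push_neg at hge
      have h7 := Real.rpow_le_rpow (by positivity) hge hq'pos.le
      linarith
    linarith
  exact htend

set_option maxHeartbeats 1000000 in
lemma stmt9_backward (hq'def : q' = q.toReal) (hpq' : p'.HolderConjugate q')
    (xs : lp (fun _ : ℕ => X) p) (hB : HasSum (fun i => ‖xs i‖ ^ p') 1)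
    (hKc' : ∀ i, xs i ≠ 0 → IsCompact {g : StrongDual ℝ X | ‖g‖ = 1 ∧ g (‖xs i‖⁻¹ • xs i) = 1}) :
    IsCompact {ψ : lp (fun _ : ℕ => StrongDual ℝ X) q | ‖ψ‖ = 1 ∧ ∑' j, ψ j (xs j) = 1} := by
  classical
  have hq'pos : 0 < q' := hpq'.symm.pos
  set K : ℕ → Set (StrongDual ℝ X) :=
    fun i => {g | ‖g‖ = ‖xs i‖ ^ (p' - 1) ∧ g (xs i) = ‖xs i‖ ^ p'} with hK
  have hKc : ∀ i, IsCompact (K i) := by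
    intro i
    rcases eq_or_ne (xs i) 0 with h0 | h0
    · have hsing : K i = {0} := by
        apply Set.eq_singleton_iff_unique_mem.mpr
        constructor
        · constructor
          · rw [h0, norm_zero, norm_zero,
              Real.zero_rpow (by linarith [hpq'.lt] : p' - 1 ≠ 0)]
          · rw [h0, norm_zero, Real.zero_rpow hpq'.ne_zero]
            simp
        · intro g hg
          have hgn : ‖g‖ = 0 := by
            rw [hg.1, h0, norm_zero,
              Real.zero_rpow (by linarith [hpq'.lt] : p' - 1 ≠ 0)]
          exact norm_eq_zero.mp hgn
      rw [hsing]
      exact isCompact_singleton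
    · have hbpos : (0:ℝ) < ‖xs i‖ := norm_pos_iff.mpr h0
      set r := ‖xs i‖ ^ (p' - 1) with hrdef
      have hrpos : 0 < r := Real.rpow_pos_of_pos hbpos _
      have hrb : r * ‖xs i‖ = ‖xs i‖ ^ p' := by
        rw [hrdef, ← Real.rpow_add_one hbpos.ne']
        ring_nf
      have himg : K i = (fun g : StrongDual ℝ X => r • g) ''
          {g | ‖g‖ = 1 ∧ g (‖xs i‖⁻¹ • xs i) = 1} := by
        ext g
        constructor
        · intro hg
          refine ⟨r⁻¹ • g, ⟨?_, ?_⟩, ?_⟩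
          · rw [norm_smul, hg.1, Real.norm_eq_abs,
              abs_of_nonneg (inv_nonneg.mpr hrpos.le), ← hrdef, inv_mul_cancel₀ hrpos.ne']
          · simp only [ContinuousLinearMap.smul_apply, map_smul, smul_eq_mul]
            rw [hg.2, ← hrb]
            field_simp
          · show r • (r⁻¹ • g) = g
            rw [smul_smul, mul_inv_cancel₀ hrpos.ne', one_smul]
        · rintro ⟨g0, ⟨hn, hv⟩, rfl⟩
          have hgx : g0 (xs i) = ‖xs i‖ := by
            have h := hv
            rw [map_smul, smul_eq_mul] at h
            field_simp at h
            linarith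
          constructor
          · rw [norm_smul, hn, mul_one, Real.norm_eq_abs, abs_of_nonneg hrpos.le]
          · simp only [ContinuousLinearMap.smul_apply]
            rw [smul_eq_mul, hgx, hrb]
      rw [himg]
      exact (hKc' i h0).image (continuous_const_smul r)
  have hT : IsCompact (Set.pi Set.univ K) := isCompact_univ_pi hKc
  have hTsum : ∀ f : ∀ _ : ℕ, StrongDual ℝ X, (∀ j, f j ∈ K j) → Memℓp f q := by
    intro f hf
    apply memℓp_gen
    have he : (fun j => ‖f j‖ ^ q.toReal) = fun j => ‖xs j‖ ^ p' := by
      funext j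
      rw [← hq'def]
      exact stmt9_normK hpq' (hf j).1
    rw [he]
    exact hB.summable
  set Φ : (∀ _ : ℕ, StrongDual ℝ X) → lp (fun _ : ℕ => StrongDual ℝ X) q :=
    fun f => if h : Memℓp f q then ⟨f, h⟩ else 0 with hΦdef
  have hΦval : ∀ f (h : Memℓp f q), Φ f = ⟨f, h⟩ := fun f h => dif_pos h
  have himgS : {ψ : lp (fun _ : ℕ => StrongDual ℝ X) q | ‖ψ‖ = 1 ∧ ∑' j, ψ j (xs j) = 1}
      = Φ '' (Set.pi Set.univ K) := by
    ext ψ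
    constructor
    · intro hψ
      refine ⟨⇑ψ, fun j _ => (stmt9_mem hq'def hpq' xs hB ψ).mp hψ j, ?_⟩
      rw [hΦval _ (lp.memℓp ψ)]
    · rintro ⟨f, hf, rfl⟩
      have hf' : ∀ j, f j ∈ K j := fun j => hf j (Set.mem_univ j)
      have hm := hTsum f hf'
      rw [hΦval f hm]
      exact (stmt9_mem hq'def hpq' xs hB _).mpr (fun j => hf' j)
  rw [himgS]
  apply hT.image_of_continuousOn
  apply stmt9_cont hq'def hpq' xs hB Φ (Set.pi Set.univ K)
  · intro f hf j
    exact (hf j (Set.mem_univ j)).1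
  · intro f hf
    exact hTsum f (fun j => hf j (Set.mem_univ j))
  · exact hΦval

end Aux

/-- Let `(x_i) ∈ ℓ^p(X)` be a unit vector.  The state space
`S_{(x_i)} = {(x_i*) ∈ ℓ^q(X*) : ‖(x_i*)‖_q = 1, ∑ x_i*(x_i) = 1}` is norm compact
iff for each `i` with `x_i ≠ 0` the state space `S_{x_i/‖x_i‖} ⊆ X*` is norm compact. -/
theorem stmt9 {X : Type*} [NormedAddCommGroup X] [NormedSpace ℝ X] [CompleteSpace X]
    (p q : ENNReal) [Fact (1 ≤ p)] [Fact (1 ≤ q)]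
    (hp : 1 < p) (hp' : p ≠ ⊤) (hpq : 1 / p + 1 / q = 1)
    (xs : lp (fun _ : ℕ => X) p) (hxs : ‖xs‖ = 1) :
    IsCompact {ψ : lp (fun _ : ℕ => StrongDual ℝ X) q |
        ‖ψ‖ = 1 ∧ ∑' i, ψ i (xs i) = 1} ↔
      ∀ i, xs i ≠ 0 → IsCompact
        {g : StrongDual ℝ X | ‖g‖ = 1 ∧ g (‖xs i‖⁻¹ • xs i) = 1} := by
  have hp0 : p ≠ 0 := (zero_lt_one.trans hp).ne'
  have hq0 : q ≠ 0 := (zero_lt_one.trans_le (Fact.out : (1:ENNReal) ≤ q)).ne'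
  have hpq' : p.toReal.HolderConjugate q.toReal := by
    rw [Real.holderConjugate_iff]
    constructor
    · have := (ENNReal.toReal_lt_toReal (by simp) hp').mpr hp
      simpa using this
    · have h1 : p⁻¹ ≠ ⊤ := by simp [hp0]
      have h2 : q⁻¹ ≠ ⊤ := by simp [hq0]
      have := congrArg ENNReal.toReal hpq
      rwa [one_div, one_div, ENNReal.toReal_add h1 h2, ENNReal.toReal_inv, ENNReal.toReal_inv,
        ENNReal.toReal_one] at this
  have hB : HasSum (fun i => ‖xs i‖ ^ p.toReal) 1 := by
    have := lp.hasSum_norm hpq'.pos xs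
    rwa [hxs, Real.one_rpow] at this
  constructor
  · intro hS i hne
    exact stmt9_forward hq0 rfl hpq' xs hB hS i hne
  · intro hKc'
    exact stmt9_backward rfl hpq' xs hB hKc'
end
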